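/- arXiv:2604.22221 — 5 statements merged into one kernel-verified Lean document; each statement's English description precedes it below -/
import Mathlib

section
/- Let g₁, g₂ : ℝ → ℝ be nondecreasing functions that are square-integrable with respect to the standard Gaussian measure γ on ℝ, and for ρ ∈ [−1,1] let c(ρ) = ∫∫ g₁(z₁) g₂(ρ z₁ + √(1−ρ²) z₂) dγ(z₁) dγ(z₂). Then c is continuous on the closed interval [−1,1]. (Continuity of the NORTA correlation-matching function, which together with its monotonicity justifies solving c(ρ_Z) = ρ_X by a numerical line search.) -/
open MeasureTheory ProbabilityTheory

open Filter Real Topology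
open scoped ENNReal NNReal

lemma norta_pdf_symm {a b : ℝ} (hab : a ^ 2 + b ^ 2 = 1) (hb : b ≠ 0) (x z : ℝ) :
    gaussianPDFReal (a * z) ⟨b ^ 2, sq_nonneg b⟩ x * gaussianPDFReal 0 1 z
      = gaussianPDFReal (a * x) ⟨b ^ 2, sq_nonneg b⟩ z * gaussianPDFReal 0 1 x := by
  simp only [gaussianPDFReal, NNReal.coe_mk, NNReal.coe_one]
  have hb2 : b ^ 2 ≠ 0 := pow_ne_zero 2 hb
  have hexp : rexp (-(x - a * z) ^ 2 / (2 * b ^ 2)) * rexp (-(z - 0) ^ 2 / (2 * 1))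
      = rexp (-(z - a * x) ^ 2 / (2 * b ^ 2)) * rexp (-(x - 0) ^ 2 / (2 * 1)) := by
    rw [← Real.exp_add, ← Real.exp_add]
    congr 1
    field_simp
    ring_nf
    linear_combination (x ^ 2 - z ^ 2) * hab
  change (√(2 * π * b ^ 2))⁻¹ * rexp (-(x - a * z) ^ 2 / (2 * b ^ 2)) *
      ((√(2 * π * 1))⁻¹ * rexp (-(z - 0) ^ 2 / (2 * 1))) =
    (√(2 * π * b ^ 2))⁻¹ * rexp (-(z - a * x) ^ 2 / (2 * b ^ 2)) *
      ((√(2 * π * 1))⁻¹ * rexp (-(x - 0) ^ 2 / (2 * 1)))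
  linear_combination ((Real.sqrt (2 * π * b ^ 2))⁻¹ * (Real.sqrt (2 * π * 1))⁻¹) * hexp

lemma norta_meas_pdf {a : ℝ} (vb : NNReal) (x : ℝ) :
    Measurable fun z : ℝ => gaussianPDF (a * z) vb x := by
  simp only [gaussianPDF, gaussianPDFReal]
  apply Measurable.ennreal_ofReal
  fun_prop

lemma norta_lintegral_pdf {a b : ℝ} (hab : a ^ 2 + b ^ 2 = 1) (hb : b ≠ 0) (x : ℝ) :
    ∫⁻ z, gaussianPDF (a * z) ⟨b ^ 2, sq_nonneg b⟩ x ∂(gaussianReal 0 1)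
      = gaussianPDF 0 1 x := by
  have hvb : (⟨b ^ 2, sq_nonneg b⟩ : NNReal) ≠ 0 := by
    simp [← NNReal.coe_ne_zero, pow_ne_zero 2 hb]
  rw [gaussianReal_of_var_ne_zero 0 one_ne_zero,
    lintegral_withDensity_eq_lintegral_mul _ (measurable_gaussianPDF 0 1) (norta_meas_pdf (⟨b ^ 2, sq_nonneg b⟩ : NNReal) x)]
  have hpt : ∀ z : ℝ, (gaussianPDF 0 1 * fun z => gaussianPDF (a * z) ⟨b ^ 2, sq_nonneg b⟩ x) z
      = ENNReal.ofReal (gaussianPDFReal 0 1 x) * gaussianPDF (a * x) ⟨b ^ 2, sq_nonneg b⟩ z := by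
    intro z
    simp only [Pi.mul_apply, gaussianPDF]
    rw [← ENNReal.ofReal_mul (gaussianPDFReal_nonneg _ _ _),
      ← ENNReal.ofReal_mul (gaussianPDFReal_nonneg _ _ _)]
    rw [mul_comm (gaussianPDFReal 0 1 z), norta_pdf_symm hab hb x z, mul_comm]
  simp only [hpt]
  rw [lintegral_const_mul _ (measurable_gaussianPDF (a * x) (⟨b ^ 2, sq_nonneg b⟩ : NNReal)),
    lintegral_gaussianPDF_eq_one _ hvb, mul_one]
  rfl

lemma norta_map_gaussian {a b : ℝ} (hab : a ^ 2 + b ^ 2 = 1) :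
    Measure.map (fun z : ℝ × ℝ => a * z.1 + b * z.2)
      ((gaussianReal 0 1).prod (gaussianReal 0 1)) = gaussianReal 0 1 := by
  have hL : Measurable fun z : ℝ × ℝ => a * z.1 + b * z.2 := by fun_prop
  by_cases hb : b = 0
  · subst hb
    have ha2 : a ^ 2 = 1 := by linarith
    have : (fun z : ℝ × ℝ => a * z.1 + 0 * z.2) = (a * ·) ∘ Prod.fst := by
      funext z; simp
    rw [this, ← Measure.map_map (measurable_const_mul a) measurable_fst,
      Measure.map_fst_prod, measure_univ, one_smul, gaussianReal_map_const_mul]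
    norm_num
    congr 1
    ext
    simp [ha2]
  · have hvb : (⟨b ^ 2, sq_nonneg b⟩ : NNReal) ≠ 0 := by
      simp [← NNReal.coe_ne_zero, pow_ne_zero 2 hb]
    ext s hs
    rw [Measure.map_apply hL hs, Measure.prod_apply (hL hs)]
    have hinner : ∀ z₁ : ℝ, (gaussianReal 0 1)
        (Prod.mk z₁ ⁻¹' ((fun z : ℝ × ℝ => a * z.1 + b * z.2) ⁻¹' s))
        = gaussianReal (a * z₁) ⟨b ^ 2, sq_nonneg b⟩ s := by
      intro z₁
      have hpre : Prod.mk z₁ ⁻¹' ((fun z : ℝ × ℝ => a * z.1 + b * z.2) ⁻¹' s)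
          = (fun z₂ : ℝ => a * z₁ + b * z₂) ⁻¹' s := rfl
      have hco : (fun z₂ : ℝ => a * z₁ + b * z₂) = ((a * z₁) + ·) ∘ (b * ·) := rfl
      rw [hpre, ← Measure.map_apply (by fun_prop) hs, hco,
        ← Measure.map_map (by fun_prop) (by fun_prop),
        gaussianReal_map_const_mul, gaussianReal_map_const_add]
      norm_num
      rfl
    simp only [hinner]
    have hmeas : AEMeasurable (Function.uncurry fun (z₁ x : ℝ) =>
        gaussianPDF (a * z₁) ⟨b ^ 2, sq_nonneg b⟩ x)
        ((gaussianReal 0 1).prod (volume.restrict s)) := by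
      apply Measurable.aemeasurable
      simp only [Function.uncurry, gaussianPDF, gaussianPDFReal]
      apply Measurable.ennreal_ofReal
      fun_prop
    simp_rw [gaussianReal_apply _ hvb s]
    rw [lintegral_lintegral_swap hmeas]
    simp_rw [norta_lintegral_pdf hab hb]
    exact (gaussianReal_apply 0 one_ne_zero s).symm

lemma norta_pratt {α : Type*} [MeasurableSpace α] {μ : Measure α}
    {f : ℕ → α → ℝ} {F : α → ℝ} {h : ℕ → α → ℝ} {H : α → ℝ}
    (hfm : ∀ n, AEStronglyMeasurable (f n) μ)
    (hFi : Integrable F μ)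
    (hhi : ∀ n, Integrable (h n) μ) (hHi : Integrable H μ)
    (hle : ∀ n, ∀ᵐ x ∂μ, |f n x| ≤ h n x)
    (hftend : ∀ᵐ x ∂μ, Tendsto (fun n => f n x) atTop (𝓝 (F x)))
    (hhtend : ∀ᵐ x ∂μ, Tendsto (fun n => h n x) atTop (𝓝 (H x)))
    (hhint : Tendsto (fun n => ∫ x, h n x ∂μ) atTop (𝓝 (∫ x, H x ∂μ))) :
    Tendsto (fun n => ∫ x, f n x ∂μ) atTop (𝓝 (∫ x, F x ∂μ)) := by
  -- |F| ≤ H a.e.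
  have hFH : ∀ᵐ x ∂μ, |F x| ≤ H x := by
    filter_upwards [hftend, hhtend, ae_all_iff.2 hle] with x h1 h2 h3
    exact le_of_tendsto_of_tendsto (h1.abs) h2 (Eventually.of_forall h3)
  have hfi : ∀ n, Integrable (f n) μ := fun n =>
    (hhi n).mono' (hfm n) (by filter_upwards [hle n] with x hx; rwa [Real.norm_eq_abs])
  -- u n = |f n - F|, G n = h n + H
  set u : ℕ → α → ℝ := fun n x => |f n x - F x| with hu
  set G : ℕ → α → ℝ := fun n x => h n x + H x with hG
  have hGi : ∀ n, Integrable (G n) μ := fun n => (hhi n).add hHi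
  have hui : ∀ n, Integrable (u n) μ := fun n => ((hfi n).sub hFi).abs
  have huG : ∀ n, ∀ᵐ x ∂μ, 0 ≤ u n x ∧ u n x ≤ G n x := by
    intro n
    filter_upwards [hle n, hFH] with x h1 h2
    exact ⟨abs_nonneg _, (abs_sub _ _).trans (add_le_add h1 h2)⟩
  -- lintegral quantities
  set U : ℕ → ℝ≥0∞ := fun n => ∫⁻ x, ENNReal.ofReal (u n x) ∂μ with hU
  set B : ℕ → ℝ≥0∞ := fun n => ∫⁻ x, ENNReal.ofReal (G n x - u n x) ∂μ with hB
  set A : ℕ → ℝ≥0∞ := fun n => ∫⁻ x, ENNReal.ofReal (G n x) ∂μ with hA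
  have hGnn : ∀ n, ∀ᵐ x ∂μ, 0 ≤ G n x := by
    intro n; filter_upwards [huG n] with x hx; linarith [hx.1, hx.2]
  have hAeq : ∀ n, A n = ENNReal.ofReal (∫ x, G n x ∂μ) :=
    fun n => (ofReal_integral_eq_lintegral_ofReal (hGi n) (hGnn n)).symm
  have hUB : ∀ n, U n + B n = A n := by
    intro n
    rw [hU, hB, hA, ← lintegral_add_left' ((hui n).aemeasurable.ennreal_ofReal)]
    apply lintegral_congr_ae
    filter_upwards [huG n] with x hx
    rw [← ENNReal.ofReal_add hx.1 (by linarith [hx.2])]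
    congr 1; ring
  have hBA : ∀ n, B n ≤ A n := fun n => (hUB n) ▸ le_add_self
  have hAfin : ∀ n, A n ≠ ⊤ := fun n => by rw [hAeq n]; exact ENNReal.ofReal_ne_top
  -- limit quantity
  set L : ℝ≥0∞ := ENNReal.ofReal (∫ x, H x ∂μ + ∫ x, H x ∂μ) with hLdef
  have hAtend : Tendsto A atTop (𝓝 L) := by
    have : Tendsto (fun n => ∫ x, G n x ∂μ) atTop (𝓝 (∫ x, H x ∂μ + ∫ x, H x ∂μ)) := by
      have : ∀ n, ∫ x, G n x ∂μ = ∫ x, h n x ∂μ + ∫ x, H x ∂μ := fun n =>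
        integral_add (hhi n) hHi
      simp_rw [this]
      exact hhint.add tendsto_const_nhds
    have hAfun : A = fun n => ENNReal.ofReal (∫ x, G n x ∂μ) := funext hAeq
    rw [hAfun]
    exact (ENNReal.continuous_ofReal.tendsto _).comp this
  have hLfin : L ≠ ⊤ := ENNReal.ofReal_ne_top
  have hHnn : ∀ᵐ x ∂μ, 0 ≤ H x := by
    filter_upwards [hFH] with x hx; exact (abs_nonneg _).trans hx
  -- Fatou : L ≤ liminf B
  have hlim : ∀ᵐ x ∂μ, Tendsto (fun n => G n x - u n x) atTop (𝓝 (H x + H x)) := by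
    filter_upwards [hftend, hhtend] with x h1 h2
    have hu0 : Tendsto (fun n => u n x) atTop (𝓝 0) := by
      have := (h1.sub (tendsto_const_nhds (x := F x))).abs
      simpa using this
    have hG2 : Tendsto (fun n => G n x) atTop (𝓝 (H x + H x)) :=
      h2.add (tendsto_const_nhds (x := H x))
    simpa using hG2.sub hu0
  have hFatou : L ≤ atTop.liminf B := by
    have hmeas : ∀ n, AEMeasurable (fun x => ENNReal.ofReal (G n x - u n x)) μ :=
      fun n => ((hGi n).sub (hui n)).aemeasurable.ennreal_ofReal
    have key := lintegral_liminf_le' hmeas (μ := μ) (u := atTop)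
    have hcongr : ∫⁻ a, liminf (fun n => ENNReal.ofReal (G n a - u n a)) atTop ∂μ
        = ∫⁻ a, ENNReal.ofReal (H a + H a) ∂μ := by
      apply lintegral_congr_ae
      filter_upwards [hlim] with x hx
      exact ((ENNReal.continuous_ofReal.tendsto _).comp hx).liminf_eq
    have hLeq : L = ∫⁻ a, ENNReal.ofReal (H a + H a) ∂μ := by
      rw [hLdef, ← integral_add hHi hHi]
      exact ofReal_integral_eq_lintegral_ofReal (f := fun a => H a + H a) (hHi.add hHi)
        (by filter_upwards [hHnn] with x hx; simp only [Pi.zero_apply]; linarith)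
    rw [hLeq, ← hcongr]
    exact key
  -- U tends to 0
  have hUtend : Tendsto U atTop (𝓝 0) := by
    rw [ENNReal.tendsto_nhds_zero]
    intro ε hε
    rcases eq_top_or_lt_top ε with rfl | hεt
    · exact Eventually.of_forall fun n => le_top
    have hε2 : (0 : ℝ≥0∞) < ε / 2 := ENNReal.div_pos (ne_of_gt hε) (by norm_num)
    have hε2t : ε / 2 ≠ ⊤ := (ENNReal.div_lt_top hεt.ne (by norm_num)).ne
    have hev1 : ∀ᶠ n in atTop, A n < L + ε / 2 :=
      hAtend.eventually_lt_const (ENNReal.lt_add_right hLfin (ne_of_gt hε2))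
    have hev2 : ∀ᶠ n in atTop, L ≤ B n + ε / 2 := by
      rcases le_or_gt L (ε / 2) with hc | hc
      · exact Eventually.of_forall fun n => hc.trans le_add_self
      · have h1 : L - ε / 2 < atTop.liminf B :=
          lt_of_lt_of_le (ENNReal.sub_lt_self hLfin (hε2.trans hc).ne' (ne_of_gt hε2)) hFatou
        filter_upwards [eventually_lt_of_lt_liminf h1] with n hn
        have := (ENNReal.sub_lt_iff_lt_right hε2t hc.le).mp hn
        exact this.le
    filter_upwards [hev1, hev2] with n h1 h2
    have hBfin : B n ≠ ⊤ := ne_top_of_le_ne_top (hAfin n) (hBA n)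
    have hUn : U n = A n - B n := ENNReal.eq_sub_of_add_eq hBfin (hUB n)
    rw [hUn, tsub_le_iff_right]
    calc A n ≤ L + ε / 2 := h1.le
      _ ≤ (B n + ε / 2) + ε / 2 := add_le_add_left h2 _
      _ = ε + B n := by rw [add_assoc, ENNReal.add_halves, add_comm]
  -- back to real integrals
  have hUreal : Tendsto (fun n => ∫ x, u n x ∂μ) atTop (𝓝 0) := by
    have heq : ∀ n, ∫ x, u n x ∂μ = (U n).toReal := fun n => by
      rw [hU, integral_eq_lintegral_of_nonneg_ae
        (Eventually.of_forall fun x => abs_nonneg _) (hui n).aestronglyMeasurable]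
    simp_rw [heq]
    have := (ENNReal.tendsto_toReal (a := 0) (by simp)).comp hUtend
    simpa [Function.comp_def] using this
  have hdiff : ∀ n, |(∫ x, f n x ∂μ) - ∫ x, F x ∂μ| ≤ ∫ x, u n x ∂μ := by
    intro n
    rw [← integral_sub (hfi n) hFi]
    have := norm_integral_le_integral_norm (μ := μ) (f := fun x => f n x - F x)
    simpa [Real.norm_eq_abs] using this
  rw [tendsto_iff_dist_tendsto_zero]
  apply squeeze_zero (fun n => dist_nonneg) (fun n => ?_) hUreal
  rw [Real.dist_eq]
  exact hdiff n

/-- Continuity of the NORTA correlation-matching function: if `g₁, g₂` are nondecreasing and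
square-integrable with respect to the standard Gaussian measure `γ`, then
`c(ρ) = ∫∫ g₁(z₁) g₂(ρ z₁ + √(1-ρ²) z₂) dγ(z₁) dγ(z₂)` is continuous on `[-1, 1]`. -/
theorem norta_matching_continuous (g₁ g₂ : ℝ → ℝ)
    (hg₁ : Monotone g₁) (hg₂ : Monotone g₂)
    (hg₁L2 : MemLp g₁ 2 (gaussianReal 0 1)) (hg₂L2 : MemLp g₂ 2 (gaussianReal 0 1)) :
    ContinuousOn (fun ρ : ℝ =>
        ∫ z₁, ∫ z₂, g₁ z₁ * g₂ (ρ * z₁ + Real.sqrt (1 - ρ ^ 2) * z₂)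
          ∂(gaussianReal 0 1) ∂(gaussianReal 0 1))
      (Set.Icc (-1 : ℝ) 1) := by
  classical
  set γ : Measure ℝ := gaussianReal 0 1 with hγdef
  set μ : Measure (ℝ × ℝ) := γ.prod γ with hμdef
  have hg₁m : Measurable g₁ := hg₁.measurable
  have hg₂m : Measurable g₂ := hg₂.measurable
  have hsq : ∀ ρ ∈ Set.Icc (-1 : ℝ) 1, ρ ^ 2 + Real.sqrt (1 - ρ ^ 2) ^ 2 = 1 := by
    intro ρ hρ
    rw [Real.sq_sqrt (by nlinarith [hρ.1, hρ.2])]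
    ring
  have hLmeas : ∀ ρ : ℝ, Measurable fun z : ℝ × ℝ => ρ * z.1 + Real.sqrt (1 - ρ ^ 2) * z.2 :=
    fun ρ => by fun_prop
  have hmp : ∀ ρ ∈ Set.Icc (-1 : ℝ) 1, MeasurePreserving
      (fun z : ℝ × ℝ => ρ * z.1 + Real.sqrt (1 - ρ ^ 2) * z.2) μ γ :=
    fun ρ hρ => ⟨hLmeas ρ, norta_map_gaussian (hsq ρ hρ)⟩
  have hmapfst : Measure.map Prod.fst μ = γ := by
    rw [hμdef, Measure.map_fst_prod, measure_univ, one_smul]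
  have hfstL2 : MemLp (fun z : ℝ × ℝ => g₁ z.1) 2 μ :=
    hg₁L2.comp_measurePreserving ⟨measurable_fst, hmapfst⟩
  have hcompL2 : ∀ ρ ∈ Set.Icc (-1 : ℝ) 1,
      MemLp (fun z : ℝ × ℝ => g₂ (ρ * z.1 + Real.sqrt (1 - ρ ^ 2) * z.2)) 2 μ :=
    fun ρ hρ => hg₂L2.comp_measurePreserving (hmp ρ hρ)
  have habs : ∀ a b : ℝ, |a * b| ≤ (a ^ 2 + b ^ 2) / 2 := by
    intro a b
    rw [abs_mul]
    nlinarith [sq_abs a, sq_abs b, sq_nonneg (|a| - |b|)]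
  have hsqint : ∀ ρ ∈ Set.Icc (-1 : ℝ) 1, Integrable (fun z : ℝ × ℝ =>
      ((g₁ z.1) ^ 2 + (g₂ (ρ * z.1 + Real.sqrt (1 - ρ ^ 2) * z.2)) ^ 2) / 2) μ :=
    fun ρ hρ => ((hfstL2.integrable_sq).add ((hcompL2 ρ hρ).integrable_sq)).div_const 2
  have hintF : ∀ ρ ∈ Set.Icc (-1 : ℝ) 1, Integrable (fun z : ℝ × ℝ =>
      g₁ z.1 * g₂ (ρ * z.1 + Real.sqrt (1 - ρ ^ 2) * z.2)) μ := by
    intro ρ hρ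
    refine (hsqint ρ hρ).mono'
      ((hg₁m.comp measurable_fst).mul (hg₂m.comp (hLmeas ρ))).aestronglyMeasurable ?_
    exact Eventually.of_forall fun z => by
      rw [Real.norm_eq_abs]; exact habs _ _
  have hiter : ∀ ρ ∈ Set.Icc (-1 : ℝ) 1,
      (∫ z₁, ∫ z₂, g₁ z₁ * g₂ (ρ * z₁ + Real.sqrt (1 - ρ ^ 2) * z₂) ∂γ ∂γ)
        = ∫ z, g₁ z.1 * g₂ (ρ * z.1 + Real.sqrt (1 - ρ ^ 2) * z.2) ∂μ :=
    fun ρ hρ => integral_integral (hintF ρ hρ)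
  have hsqintval : ∀ ρ ∈ Set.Icc (-1 : ℝ) 1,
      ∫ z, ((g₁ z.1) ^ 2 + (g₂ (ρ * z.1 + Real.sqrt (1 - ρ ^ 2) * z.2)) ^ 2) / 2 ∂μ
        = ((∫ x, (g₁ x) ^ 2 ∂γ) + ∫ x, (g₂ x) ^ 2 ∂γ) / 2 := by
    intro ρ hρ
    have e1 : ∫ x, (g₁ x) ^ 2 ∂γ = ∫ z : ℝ × ℝ, (g₁ z.1) ^ 2 ∂μ := by
      rw [← hmapfst]
      exact integral_map measurable_fst.aemeasurable ((hg₁m.pow_const 2).aestronglyMeasurable)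
    have e2 : ∫ x, (g₂ x) ^ 2 ∂γ
        = ∫ z : ℝ × ℝ, (g₂ (ρ * z.1 + Real.sqrt (1 - ρ ^ 2) * z.2)) ^ 2 ∂μ := by
      rw [← (hmp ρ hρ).map_eq]
      exact integral_map (hLmeas ρ).aemeasurable ((hg₂m.pow_const 2).aestronglyMeasurable)
    rw [integral_div, integral_add (hfstL2.integrable_sq) ((hcompL2 ρ hρ).integrable_sq), e1, e2]
  -- continuity
  intro ρ₀ hρ₀
  have : Tendsto (fun ρ : ℝ =>
      ∫ z₁, ∫ z₂, g₁ z₁ * g₂ (ρ * z₁ + Real.sqrt (1 - ρ ^ 2) * z₂) ∂γ ∂γ)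
      (nhdsWithin ρ₀ (Set.Icc (-1 : ℝ) 1))
      (𝓝 (∫ z₁, ∫ z₂, g₁ z₁ * g₂ (ρ₀ * z₁ + Real.sqrt (1 - ρ₀ ^ 2) * z₂) ∂γ ∂γ)) := by
    refine tendsto_iff_seq_tendsto.mpr fun u hu => ?_
    have humem : ∀ᶠ n in atTop, u n ∈ Set.Icc (-1 : ℝ) 1 :=
      hu.eventually eventually_mem_nhdsWithin
    set v : ℕ → ℝ := fun n => if u n ∈ Set.Icc (-1 : ℝ) 1 then u n else ρ₀ with hvdef
    have hvmem : ∀ n, v n ∈ Set.Icc (-1 : ℝ) 1 := fun n => by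
      simp only [hvdef]
      split_ifs with h
      · exact h
      · exact hρ₀
    have huv : ∀ᶠ n in atTop, u n = v n := by
      filter_upwards [humem] with n h
      simp only [hvdef]
      rw [if_pos h]
    have hv : Tendsto v atTop (𝓝 ρ₀) :=
      ((hu.mono_right nhdsWithin_le_nhds).congr' huv)
    -- a.e. continuity point
    have hD : {x : ℝ | ¬ContinuousAt g₂ x}.Countable := hg₂.countable_not_continuousAt
    have hγD : γ {x : ℝ | ¬ContinuousAt g₂ x} = 0 :=
      gaussianReal_absolutelyContinuous 0 one_ne_zero (hD.measure_zero volume)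
    have hN : μ ((fun z : ℝ × ℝ => ρ₀ * z.1 + Real.sqrt (1 - ρ₀ ^ 2) * z.2) ⁻¹'
        {x : ℝ | ¬ContinuousAt g₂ x}) = 0 := by
      rw [← Measure.map_apply (hLmeas ρ₀) hD.measurableSet, (hmp ρ₀ hρ₀).map_eq]
      exact hγD
    have hae : ∀ᵐ z ∂μ, ContinuousAt g₂ (ρ₀ * z.1 + Real.sqrt (1 - ρ₀ ^ 2) * z.2) := by
      rw [ae_iff]
      exact hN
    -- argument convergence
    have harg : ∀ z : ℝ × ℝ, Tendsto
        (fun n => v n * z.1 + Real.sqrt (1 - v n ^ 2) * z.2) atTop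
        (𝓝 (ρ₀ * z.1 + Real.sqrt (1 - ρ₀ ^ 2) * z.2)) := by
      intro z
      have h1 : Tendsto (fun n => 1 - v n ^ 2) atTop (𝓝 (1 - ρ₀ ^ 2)) :=
        tendsto_const_nhds.sub (hv.pow 2)
      have h2 : Tendsto (fun n => Real.sqrt (1 - v n ^ 2)) atTop
          (𝓝 (Real.sqrt (1 - ρ₀ ^ 2))) :=
        ((Real.continuous_sqrt.tendsto _).comp h1)
      exact (hv.mul tendsto_const_nhds).add (h2.mul tendsto_const_nhds)
    -- apply Pratt
    have hmain : Tendsto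
        (fun n => ∫ z : ℝ × ℝ, g₁ z.1 * g₂ (v n * z.1 + Real.sqrt (1 - v n ^ 2) * z.2) ∂μ)
        atTop
        (𝓝 (∫ z : ℝ × ℝ, g₁ z.1 * g₂ (ρ₀ * z.1 + Real.sqrt (1 - ρ₀ ^ 2) * z.2) ∂μ)) := by
      refine norta_pratt
        (f := fun n z => g₁ z.1 * g₂ (v n * z.1 + Real.sqrt (1 - v n ^ 2) * z.2))
        (h := fun n z => ((g₁ z.1) ^ 2
          + (g₂ (v n * z.1 + Real.sqrt (1 - v n ^ 2) * z.2)) ^ 2) / 2)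
        (H := fun z => ((g₁ z.1) ^ 2
          + (g₂ (ρ₀ * z.1 + Real.sqrt (1 - ρ₀ ^ 2) * z.2)) ^ 2) / 2)
        (fun n => ((hg₁m.comp measurable_fst).mul
          (hg₂m.comp (hLmeas (v n)))).aestronglyMeasurable)
        (hintF ρ₀ hρ₀)
        (fun n => hsqint (v n) (hvmem n))
        (hsqint ρ₀ hρ₀)
        (fun n => Eventually.of_forall fun z => habs _ _)
        ?_ ?_ ?_
      · filter_upwards [hae] with z hz
        exact tendsto_const_nhds.mul (hz.tendsto.comp (harg z))
      · filter_upwards [hae] with z hz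
        exact (tendsto_const_nhds.add (((hz.tendsto.comp (harg z)).pow 2))).div_const 2
      · have hconst : ∀ n, (∫ z : ℝ × ℝ, ((g₁ z.1) ^ 2
            + (g₂ (v n * z.1 + Real.sqrt (1 - v n ^ 2) * z.2)) ^ 2) / 2 ∂μ)
            = ∫ z : ℝ × ℝ, ((g₁ z.1) ^ 2
              + (g₂ (ρ₀ * z.1 + Real.sqrt (1 - ρ₀ ^ 2) * z.2)) ^ 2) / 2 ∂μ := fun n => by
          rw [hsqintval (v n) (hvmem n), ← hsqintval ρ₀ hρ₀]
        simp only [hconst]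
        exact tendsto_const_nhds
    have hseq : Tendsto
        (fun n => ∫ z₁, ∫ z₂, g₁ z₁ * g₂ (v n * z₁ + Real.sqrt (1 - v n ^ 2) * z₂) ∂γ ∂γ)
        atTop
        (𝓝 (∫ z₁, ∫ z₂, g₁ z₁ * g₂ (ρ₀ * z₁ + Real.sqrt (1 - ρ₀ ^ 2) * z₂) ∂γ ∂γ)) := by
      rw [hiter ρ₀ hρ₀]
      exact hmain.congr fun n => (hiter (v n) (hvmem n)).symm
    refine hseq.congr' ?_
    filter_upwards [huv] with n h
    simp only [Function.comp_apply, h]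
  exact this
end

section
/- Let g₁, g₂ : ℝ → ℝ be nondecreasing and square-integrable with respect to the standard Gaussian measure γ, and let c(ρ) = ∫∫ g₁(z₁) g₂(ρ z₁ + √(1−ρ²) z₂) dγ(z₁) dγ(z₂) for ρ ∈ [−1,1]. Then for every target value r with c(−1) ≤ r ≤ c(1) there exists ρ ∈ [−1,1] such that c(ρ) = r. (Solvability of the NORTA correlation-matching equation c_{ij}[ρ_Z(i,j)] = ρ_X(i,j) for any attainable target correlation, guaranteeing the line search terminates with an exact match.) -/
open MeasureTheory ProbabilityTheory Real Filter Topology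

lemma pdf_swap {a b : ℝ} (hab : a^2 + b^2 = 1) (hb : b ≠ 0) (x t : ℝ) :
    gaussianPDFReal 0 1 x * gaussianPDFReal (a*x) ⟨b^2, sq_nonneg b⟩ t
      = gaussianPDFReal 0 1 t * gaussianPDFReal (a*t) ⟨b^2, sq_nonneg b⟩ x := by
  have hb2 : (0:ℝ) < b^2 := by positivity
  simp only [gaussianPDFReal, NNReal.coe_mk, NNReal.coe_one]
  have key : ∀ u w : ℝ, (Real.sqrt (2*π*1))⁻¹ * Real.exp (-(u-0)^2/(2*1)) *
      ((Real.sqrt (2*π*b^2))⁻¹ * Real.exp (-(w-a*u)^2/(2*b^2)))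
      = (Real.sqrt (2*π*1))⁻¹ * (Real.sqrt (2*π*b^2))⁻¹ *
        Real.exp (-(u-0)^2/(2*1) + -(w-a*u)^2/(2*b^2)) := by
    intro u w; rw [Real.exp_add]; ring
  erw [key x t, key t x]
  congr 1
  field_simp
  ring_nf
  congr 1
  linear_combination (-1/2 * b⁻¹^2 * (x^2 - t^2)) * hab

lemma map_rot {a b : ℝ} (hab : a^2 + b^2 = 1) :
    MeasurePreserving (fun p : ℝ × ℝ => a * p.1 + b * p.2)
      ((gaussianReal 0 1).prod (gaussianReal 0 1)) (gaussianReal 0 1) := by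
  have hmeas : Measurable (fun p : ℝ × ℝ => a * p.1 + b * p.2) :=
    (measurable_fst.const_mul a).add (measurable_snd.const_mul b)
  refine ⟨hmeas, ?_⟩
  by_cases hb : b = 0
  · subst hb
    have ha2 : a^2 = 1 := by linarith [hab]
    simp_rw [zero_mul, add_zero]
    have : (fun p : ℝ × ℝ => a * p.1) = (fun x : ℝ => a * x) ∘ Prod.fst := rfl
    rw [this, ← Measure.map_map (measurable_const_mul a) measurable_fst,
      Measure.map_fst_prod, measure_univ, one_smul, gaussianReal_map_const_mul]
    norm_num
    congr 1
    ext
    simp [ha2]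
  · have hvb : (⟨b^2, sq_nonneg b⟩ : NNReal) ≠ 0 := by
      intro h
      exact pow_ne_zero 2 hb (congrArg NNReal.toReal h)
    set vb : NNReal := ⟨b^2, sq_nonneg b⟩ with hvbdef
    ext s hs
    rw [Measure.map_apply hmeas hs, Measure.prod_apply (hmeas hs)]
    have hsec : ∀ x : ℝ, (Prod.mk x ⁻¹' ((fun p : ℝ × ℝ => a * p.1 + b * p.2) ⁻¹' s))
        = (fun y => a * x + b * y) ⁻¹' s := fun x => rfl
    have hmap : ∀ x : ℝ, gaussianReal 0 1 ((fun y => a * x + b * y) ⁻¹' s)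
        = gaussianReal (a*x) vb s := by
      intro x
      have h1 : (fun y : ℝ => a * x + b * y) = (fun z : ℝ => a * x + z) ∘ (fun y => b * y) := rfl
      rw [← Measure.map_apply ((measurable_const_mul b).const_add _) hs, h1,
        ← Measure.map_map (measurable_const_add (a*x)) (measurable_const_mul b),
        gaussianReal_map_const_mul, gaussianReal_map_const_add]
      norm_num
      rfl
    simp_rw [hsec, hmap]
    -- now : ∫⁻ x, gaussianReal (a*x) vb s ∂(gaussianReal 0 1) = gaussianReal 0 1 s
    simp_rw [gaussianReal_apply _ hvb s]
    rw [gaussianReal_of_var_ne_zero _ one_ne_zero]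
    have hker : Measurable (fun q : ℝ × ℝ => gaussianPDF (a * q.1) vb q.2) := by
      apply Measurable.ennreal_ofReal
      simp only [gaussianPDFReal]
      fun_prop
    rw [lintegral_withDensity_eq_lintegral_mul _ (measurable_gaussianPDF _ _)
      (Measurable.lintegral_prod_right' hker)]
    simp only [Pi.mul_apply]
    have hswap : ∫⁻ x, gaussianPDF 0 1 x * ∫⁻ t in s, gaussianPDF (a * x) vb t
        = ∫⁻ x, ∫⁻ t in s, gaussianPDF 0 1 x * gaussianPDF (a * x) vb t := by
      congr 1; ext x; rw [lintegral_const_mul _ (measurable_gaussianPDF _ _)]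
    rw [hswap, lintegral_lintegral_swap]
    · have hinner : ∀ t : ℝ, ∫⁻ x, gaussianPDF 0 1 x * gaussianPDF (a * x) vb t
          = gaussianPDF 0 1 t := by
        intro t
        have : ∀ x : ℝ, gaussianPDF 0 1 x * gaussianPDF (a * x) vb t
            = gaussianPDF 0 1 t * gaussianPDF (a * t) vb x := by
          intro x
          simp only [gaussianPDF]
          rw [← ENNReal.ofReal_mul (gaussianPDFReal_nonneg _ _ _),
            ← ENNReal.ofReal_mul (gaussianPDFReal_nonneg _ _ _), pdf_swap hab hb]
        simp_rw [this]
        rw [lintegral_const_mul _ (measurable_gaussianPDF _ _),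
          lintegral_gaussianPDF_eq_one _ hvb, mul_one]
      simp_rw [hinner]
      rw [withDensity_apply _ hs]
    · exact (((measurable_gaussianPDF 0 1).comp measurable_fst).mul hker).aemeasurable

variable {α : Type*} [MeasurableSpace α] {μ : Measure α}

lemma myMul_integrable {f g : α → ℝ} (hf : MemLp f 2 μ) (hg : MemLp g 2 μ) :
    Integrable (fun x => f x * g x) μ := by
  rw [← memLp_one_iff_integrable]
  refine ⟨hf.1.mul hg.1, ?_⟩
  haveI : ENNReal.HolderTriple 2 2 1 := ⟨by simp [ENNReal.inv_two_add_inv_two]⟩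
  have h := eLpNorm_le_eLpNorm_mul_eLpNorm'_of_norm (p := 2) (q := 2) (r := 1) hf.1 hg.1
    (fun a b => a * b) 1 (Filter.Eventually.of_forall fun x => by rw [norm_mul]; simp)
  exact lt_of_le_of_lt h (by simpa using ENNReal.mul_lt_top hf.2 hg.2)

lemma myCS {f g : α → ℝ} (hf : MemLp f 2 μ) (hg : MemLp g 2 μ) :
    |∫ x, f x * g x ∂μ| ≤ (∫ x, f x ^ 2 ∂μ) ^ (1/2 : ℝ) * (∫ x, g x ^ 2 ∂μ) ^ (1/2 : ℝ) := by
  have h2 : (2:ℝ).HolderConjugate 2 := Real.HolderConjugate.two_two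
  have h2' : (ENNReal.ofReal (2:ℝ)) = 2 := by rw [ENNReal.ofReal_ofNat]
  have h := integral_mul_norm_le_Lp_mul_Lq (μ := μ) h2 (h2' ▸ hf) (h2' ▸ hg)
  simp only [Real.norm_eq_abs, show (2:ℝ) = ((2:ℕ):ℝ) by norm_num, Real.rpow_natCast,
    sq_abs] at h
  have habs : |∫ x, f x * g x ∂μ| ≤ ∫ x, |f x| * |g x| ∂μ := by
    rw [← Real.norm_eq_abs]
    refine (norm_integral_le_integral_norm _).trans_eq ?_
    simp [abs_mul]
  exact habs.trans (by simpa using h)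

noncomputable def trunc (M : ℝ) (g : ℝ → ℝ) (x : ℝ) : ℝ := max (-M) (min M (g x))

lemma trunc_monotone {M : ℝ} {g : ℝ → ℝ} (hg : Monotone g) : Monotone (trunc M g) :=
  monotone_const.max (monotone_const.min hg)

lemma abs_trunc_le_abs {M : ℝ} (hM : 0 ≤ M) (g : ℝ → ℝ) (x : ℝ) :
    |trunc M g x| ≤ |g x| := by
  unfold trunc
  rcases le_total 0 (g x) with h | h
  · rw [abs_of_nonneg h, abs_of_nonneg (le_max_of_le_right (le_min hM h))]
    exact max_le (by linarith) (min_le_right _ _)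
  · have h1 : min M (g x) = g x := min_eq_right (h.trans hM)
    rw [h1, abs_of_nonpos h, abs_of_nonpos (max_le (by linarith) h)]
    simp [le_max_right]

lemma abs_trunc_le_M {M : ℝ} (hM : 0 ≤ M) (g : ℝ → ℝ) (x : ℝ) :
    |trunc M g x| ≤ M := by
  unfold trunc
  rw [abs_le]
  exact ⟨le_max_left _ _, max_le (by linarith) ((min_le_left _ _))⟩

lemma trunc_eventually_eq (g : ℝ → ℝ) (x : ℝ) :
    Filter.Tendsto (fun M : ℕ => trunc M g x) atTop (𝓝 (g x)) := by
  refine tendsto_atTop_of_eventually_const (i₀ := ⌈|g x|⌉₊) fun M hM => ?_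
  have h1 : |g x| ≤ (M : ℝ) := (Nat.le_ceil _).trans (by exact_mod_cast hM)
  rw [abs_le] at h1
  unfold trunc
  rw [min_eq_right h1.2, max_eq_right h1.1]

lemma trunc_memℒp {M : ℝ} (hM : 0 ≤ M) {g : ℝ → ℝ} (hg : Monotone g)
    (hgL2 : MemLp g 2 (gaussianReal 0 1)) : MemLp (trunc M g) 2 (gaussianReal 0 1) :=
  hgL2.of_le ((trunc_monotone hg).measurable).aestronglyMeasurable
    (Filter.Eventually.of_forall fun x => by
      simpa [Real.norm_eq_abs] using abs_trunc_le_abs hM g x)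

lemma sub_trunc_memℒp {M : ℝ} (hM : 0 ≤ M) {g : ℝ → ℝ} (hg : Monotone g)
    (hgL2 : MemLp g 2 (gaussianReal 0 1)) :
    MemLp (fun x => g x - trunc M g x) 2 (gaussianReal 0 1) :=
  hgL2.sub (trunc_memℒp hM hg hgL2)

/-- The L²-truncation error tends to zero. -/
lemma tendsto_trunc_sq_integral {g : ℝ → ℝ} (hg : Monotone g)
    (hgL2 : MemLp g 2 (gaussianReal 0 1)) :
    Filter.Tendsto (fun M : ℕ => ∫ x, (g x - trunc M g x) ^ 2 ∂(gaussianReal 0 1)) atTop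
      (𝓝 0) := by
  suffices h : Filter.Tendsto (fun M : ℕ => ∫ x, (g x - trunc M g x) ^ 2 ∂(gaussianReal 0 1))
      atTop (𝓝 (∫ _x, (0:ℝ) ∂(gaussianReal 0 1))) by simpa using h
  refine tendsto_integral_of_dominated_convergence (fun x => (2 * |g x|) ^ 2) ?_ ?_ ?_ ?_
  · intro M
    exact (((hg.measurable.sub (trunc_monotone hg).measurable).pow_const 2)).aestronglyMeasurable
  · have : Integrable (fun x => g x ^ 2) (gaussianReal 0 1) := hgL2.integrable_sq
    have h4 : (fun x => (2 * |g x|) ^ 2) = fun x => 4 * g x ^ 2 := by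
      ext x; rw [mul_pow, sq_abs]; norm_num
    rw [h4]
    exact this.const_mul 4
  · intro M
    refine Filter.Eventually.of_forall fun x => ?_
    have h1 : |g x - trunc (M:ℝ) g x| ≤ 2 * |g x| := by
      have := abs_trunc_le_abs (by positivity : (0:ℝ) ≤ (M:ℝ)) g x
      calc |g x - trunc (M:ℝ) g x| ≤ |g x| + |trunc (M:ℝ) g x| := abs_sub _ _
      _ ≤ 2 * |g x| := by linarith
    calc ‖(g x - trunc (M:ℝ) g x) ^ 2‖ = |g x - trunc (M:ℝ) g x| ^ 2 := by
          rw [Real.norm_eq_abs, abs_pow, sq_abs, ← sq_abs]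
    _ ≤ (2 * |g x|) ^ 2 := by
          have h2 : (0:ℝ) ≤ |g x - trunc (M:ℝ) g x| := abs_nonneg _
          nlinarith
  · refine Filter.Eventually.of_forall fun x => ?_
    have := (trunc_eventually_eq g x)
    have h2 : Filter.Tendsto (fun M : ℕ => g x - trunc (M:ℝ) g x) atTop (𝓝 0) := by
      simpa using (tendsto_const_nhds (x := g x)).sub this
    simpa using h2.pow 2

lemma measurePreserving_W {ρ : ℝ} (hρ : ρ ∈ Set.Icc (-1:ℝ) 1) :
    MeasurePreserving (fun p : ℝ × ℝ => ρ * p.1 + Real.sqrt (1 - ρ^2) * p.2)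
      ((gaussianReal 0 1).prod (gaussianReal 0 1)) (gaussianReal 0 1) :=
  map_rot (by rw [Real.sq_sqrt (by nlinarith [hρ.1, hρ.2] : (0:ℝ) ≤ 1 - ρ^2)]; ring)

lemma mp_fst : MeasurePreserving (Prod.fst : ℝ × ℝ → ℝ)
    ((gaussianReal 0 1).prod (gaussianReal 0 1)) (gaussianReal 0 1) :=
  ⟨measurable_fst, by rw [Measure.map_fst_prod, measure_univ, one_smul]⟩

lemma memL2_comp_W {ρ : ℝ} (hρ : ρ ∈ Set.Icc (-1:ℝ) 1) {f : ℝ → ℝ}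
    (hf : MemLp f 2 (gaussianReal 0 1)) :
    MemLp (fun p : ℝ × ℝ => f (ρ * p.1 + Real.sqrt (1 - ρ^2) * p.2)) 2
      ((gaussianReal 0 1).prod (gaussianReal 0 1)) :=
  hf.comp_measurePreserving (measurePreserving_W hρ)

lemma memL2_fst {f : ℝ → ℝ} (hf : MemLp f 2 (gaussianReal 0 1)) :
    MemLp (fun p : ℝ × ℝ => f p.1) 2 ((gaussianReal 0 1).prod (gaussianReal 0 1)) :=
  hf.comp_measurePreserving mp_fst

lemma integral_comp_W {ρ : ℝ} (hρ : ρ ∈ Set.Icc (-1:ℝ) 1) {f : ℝ → ℝ}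
    (hf : AEStronglyMeasurable f (gaussianReal 0 1)) :
    ∫ p, f (ρ * p.1 + Real.sqrt (1 - ρ^2) * p.2) ∂((gaussianReal 0 1).prod (gaussianReal 0 1))
      = ∫ x, f x ∂(gaussianReal 0 1) := by
  have h := measurePreserving_W (ρ := ρ) hρ
  calc ∫ p, f (ρ * p.1 + Real.sqrt (1 - ρ^2) * p.2) ∂((gaussianReal 0 1).prod (gaussianReal 0 1))
      = ∫ x, f x ∂(Measure.map (fun p : ℝ × ℝ => ρ * p.1 + Real.sqrt (1 - ρ^2) * p.2)
          ((gaussianReal 0 1).prod (gaussianReal 0 1))) :=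
        (integral_map h.measurable.aemeasurable (by rwa [h.map_eq])).symm
    _ = ∫ x, f x ∂(gaussianReal 0 1) := by rw [h.map_eq]

lemma integral_comp_fst {f : ℝ → ℝ} (hf : AEStronglyMeasurable f (gaussianReal 0 1)) :
    ∫ p, f p.1 ∂((gaussianReal 0 1).prod (gaussianReal 0 1)) = ∫ x, f x ∂(gaussianReal 0 1) := by
  calc ∫ p, f p.1 ∂((gaussianReal 0 1).prod (gaussianReal 0 1))
      = ∫ x, f x ∂(Measure.map (Prod.fst : ℝ × ℝ → ℝ)
          ((gaussianReal 0 1).prod (gaussianReal 0 1))) :=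
        (integral_map mp_fst.measurable.aemeasurable (by rwa [mp_fst.map_eq])).symm
    _ = ∫ x, f x ∂(gaussianReal 0 1) := by rw [mp_fst.map_eq]

section Main

variable {g₁ g₂ : ℝ → ℝ}

/-- Error bound between the full integral and the truncated one, uniform in ρ. -/
lemma err_bound (hg₁ : Monotone g₁) (hg₂ : Monotone g₂)
    (h1 : MemLp g₁ 2 (gaussianReal 0 1)) (h2 : MemLp g₂ 2 (gaussianReal 0 1))
    (M : ℕ) {ρ : ℝ} (hρ : ρ ∈ Set.Icc (-1:ℝ) 1) :
    |(∫ p, g₁ p.1 * g₂ (ρ * p.1 + Real.sqrt (1 - ρ^2) * p.2)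
        ∂((gaussianReal 0 1).prod (gaussianReal 0 1)))
      - ∫ p, trunc M g₁ p.1 * trunc M g₂ (ρ * p.1 + Real.sqrt (1 - ρ^2) * p.2)
        ∂((gaussianReal 0 1).prod (gaussianReal 0 1))|
    ≤ (∫ x, (g₁ x - trunc M g₁ x)^2 ∂(gaussianReal 0 1)) ^ (1/2:ℝ)
        * (∫ x, g₂ x ^2 ∂(gaussianReal 0 1)) ^ (1/2:ℝ)
      + (∫ x, g₁ x ^2 ∂(gaussianReal 0 1)) ^ (1/2:ℝ)
        * (∫ x, (g₂ x - trunc M g₂ x)^2 ∂(gaussianReal 0 1)) ^ (1/2:ℝ) := by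
  have hM : (0:ℝ) ≤ (M:ℝ) := Nat.cast_nonneg M
  set γ := gaussianReal 0 1
  set μ2 := γ.prod γ
  set W : ℝ × ℝ → ℝ := fun p => ρ * p.1 + Real.sqrt (1 - ρ^2) * p.2 with hW
  have hd1 : MemLp (fun x => g₁ x - trunc M g₁ x) 2 γ := sub_trunc_memℒp hM hg₁ h1
  have hd2 : MemLp (fun x => g₂ x - trunc M g₂ x) 2 γ := sub_trunc_memℒp hM hg₂ h2
  have ht1 : MemLp (trunc M g₁) 2 γ := trunc_memℒp hM hg₁ h1
  have ht2 : MemLp (trunc M g₂) 2 γ := trunc_memℒp hM hg₂ h2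
  -- lift to the product space
  have H1 : MemLp (fun p : ℝ × ℝ => g₁ p.1) 2 μ2 := memL2_fst h1
  have H2 : MemLp (fun p : ℝ × ℝ => g₂ (W p)) 2 μ2 := memL2_comp_W hρ h2
  have HT1 : MemLp (fun p : ℝ × ℝ => trunc M g₁ p.1) 2 μ2 := memL2_fst ht1
  have HT2 : MemLp (fun p : ℝ × ℝ => trunc M g₂ (W p)) 2 μ2 := memL2_comp_W hρ ht2
  have HD1 : MemLp (fun p : ℝ × ℝ => g₁ p.1 - trunc M g₁ p.1) 2 μ2 := H1.sub HT1
  have HD2 : MemLp (fun p : ℝ × ℝ => g₂ (W p) - trunc M g₂ (W p)) 2 μ2 := H2.sub HT2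
  have hIa : Integrable (fun p : ℝ × ℝ => (g₁ p.1 - trunc M g₁ p.1) * g₂ (W p)) μ2 :=
    myMul_integrable HD1 H2
  have hIb : Integrable (fun p : ℝ × ℝ =>
      trunc M g₁ p.1 * (g₂ (W p) - trunc M g₂ (W p))) μ2 := myMul_integrable HT1 HD2
  have hsplit : (∫ p, g₁ p.1 * g₂ (W p) ∂μ2) - ∫ p, trunc M g₁ p.1 * trunc M g₂ (W p) ∂μ2
      = (∫ p, (g₁ p.1 - trunc M g₁ p.1) * g₂ (W p) ∂μ2)
        + ∫ p, trunc M g₁ p.1 * (g₂ (W p) - trunc M g₂ (W p)) ∂μ2 := by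
    rw [← integral_add hIa hIb, ← integral_sub (myMul_integrable H1 H2)
      (myMul_integrable HT1 HT2)]
    congr 1; ext p; ring
  rw [hsplit]
  have cs1 := myCS HD1 H2
  have cs2 := myCS HT1 HD2
  -- transfer square integrals to γ
  have e1 : ∫ p, (g₁ p.1 - trunc M g₁ p.1)^2 ∂μ2 = ∫ x, (g₁ x - trunc M g₁ x)^2 ∂γ :=
    integral_comp_fst (hd1.aestronglyMeasurable.pow 2)
  have e2 : ∫ p, (g₂ (W p))^2 ∂μ2 = ∫ x, g₂ x ^2 ∂γ :=
    integral_comp_W hρ (h2.aestronglyMeasurable.pow 2)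
  have e3 : ∫ p, (trunc M g₁ p.1)^2 ∂μ2 = ∫ x, trunc M g₁ x ^2 ∂γ :=
    integral_comp_fst (ht1.aestronglyMeasurable.pow 2)
  have e4 : ∫ p, (g₂ (W p) - trunc M g₂ (W p))^2 ∂μ2 = ∫ x, (g₂ x - trunc M g₂ x)^2 ∂γ :=
    integral_comp_W hρ (hd2.aestronglyMeasurable.pow 2)
  rw [e1, e2] at cs1
  rw [e3, e4] at cs2
  have htle : (∫ x, trunc M g₁ x ^2 ∂γ) ^ (1/2:ℝ) ≤ (∫ x, g₁ x ^2 ∂γ) ^ (1/2:ℝ) := by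
    apply Real.rpow_le_rpow (integral_nonneg fun x => sq_nonneg _) _ (by norm_num)
    apply integral_mono ht1.integrable_sq h1.integrable_sq
    intro x
    have := abs_trunc_le_abs hM g₁ x
    calc trunc M g₁ x ^2 = |trunc M g₁ x| ^2 := (sq_abs _).symm
    _ ≤ |g₁ x| ^2 := by nlinarith [abs_nonneg (trunc M g₁ x)]
    _ = g₁ x ^2 := sq_abs _
  calc |(∫ p, (g₁ p.1 - trunc M g₁ p.1) * g₂ (W p) ∂μ2)
        + ∫ p, trunc M g₁ p.1 * (g₂ (W p) - trunc M g₂ (W p)) ∂μ2|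
      ≤ |∫ p, (g₁ p.1 - trunc M g₁ p.1) * g₂ (W p) ∂μ2|
        + |∫ p, trunc M g₁ p.1 * (g₂ (W p) - trunc M g₂ (W p)) ∂μ2| := abs_add_le _ _
    _ ≤ (∫ x, (g₁ x - trunc M g₁ x)^2 ∂γ) ^ (1/2:ℝ) * (∫ x, g₂ x ^2 ∂γ) ^ (1/2:ℝ)
        + (∫ x, trunc M g₁ x ^2 ∂γ) ^ (1/2:ℝ)
          * (∫ x, (g₂ x - trunc M g₂ x)^2 ∂γ) ^ (1/2:ℝ) := add_le_add cs1 cs2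
    _ ≤ _ := by gcongr

lemma contOn_trunc (hg₁ : Monotone g₁) (hg₂ : Monotone g₂) (M : ℕ) :
    ContinuousOn (fun ρ => ∫ p, trunc M g₁ p.1
        * trunc M g₂ (ρ * p.1 + Real.sqrt (1 - ρ^2) * p.2)
        ∂((gaussianReal 0 1).prod (gaussianReal 0 1))) (Set.Icc (-1:ℝ) 1) := by
  have hM : (0:ℝ) ≤ (M:ℝ) := Nat.cast_nonneg M
  set γ := gaussianReal 0 1
  set μ2 := γ.prod γ with hμ2
  intro ρ₀ hρ₀
  have hcg : ∀ ρ : ℝ, Measurable (fun p : ℝ × ℝ => ρ * p.1 + Real.sqrt (1 - ρ^2) * p.2) :=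
    fun ρ => (measurable_fst.const_mul ρ).add (measurable_snd.const_mul _)
  rw [ContinuousWithinAt]
  rw [Filter.tendsto_iff_seq_tendsto]
  intro u hu
  have huρ : Filter.Tendsto u atTop (𝓝 ρ₀) := hu.mono_right nhdsWithin_le_nhds
  set D : Set ℝ := {x | ¬ContinuousAt (trunc M g₂) x} with hD
  have hDc : D.Countable := (trunc_monotone hg₂).countable_not_continuousAt
  have hDmeas : MeasurableSet D := hDc.measurableSet
  have hγD : γ D = 0 := gaussianReal_absolutelyContinuous 0 one_ne_zero (hDc.measure_zero _)
  have hN : μ2 ((fun p : ℝ × ℝ => ρ₀ * p.1 + Real.sqrt (1 - ρ₀^2) * p.2) ⁻¹' D) = 0 := by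
    rw [← Measure.map_apply (measurePreserving_W hρ₀).measurable hDmeas,
      (measurePreserving_W hρ₀).map_eq]
    exact hγD
  apply tendsto_integral_of_dominated_convergence (fun _ => (M:ℝ) * (M:ℝ))
  · intro n
    exact (((trunc_monotone hg₁).measurable.comp measurable_fst).mul
      ((trunc_monotone hg₂).measurable.comp (hcg (u n)))).aestronglyMeasurable
  · exact integrable_const _
  · intro n
    refine Filter.Eventually.of_forall fun p => ?_
    rw [Real.norm_eq_abs, abs_mul]
    exact mul_le_mul (abs_trunc_le_M hM g₁ _) (abs_trunc_le_M hM g₂ _) (abs_nonneg _) hM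
  · have hae : ∀ᵐ p ∂μ2,
        p ∉ (fun p : ℝ × ℝ => ρ₀ * p.1 + Real.sqrt (1 - ρ₀^2) * p.2) ⁻¹' D := by
      rw [← MeasureTheory.compl_mem_ae_iff] at hN
      exact hN
    filter_upwards [hae] with p hp
    have hWc : Filter.Tendsto (fun n => u n * p.1 + Real.sqrt (1 - (u n)^2) * p.2) atTop
        (𝓝 (ρ₀ * p.1 + Real.sqrt (1 - ρ₀^2) * p.2)) := by
      have hcont : Continuous (fun ρ : ℝ => ρ * p.1 + Real.sqrt (1 - ρ^2) * p.2) := by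
        exact (continuous_id.mul continuous_const).add
          (((continuous_const.sub (continuous_pow 2)).sqrt).mul continuous_const)
      exact (hcont.tendsto ρ₀).comp huρ
    have hct : ContinuousAt (trunc M g₂) (ρ₀ * p.1 + Real.sqrt (1 - ρ₀^2) * p.2) :=
      not_not.mp hp
    exact (hct.tendsto.comp hWc).const_mul _

end Main

/-- Solvability of the NORTA correlation-matching equation: for `g₁, g₂` nondecreasing and
square-integrable with respect to the standard Gaussian measure, and any target `r` with
`c(-1) ≤ r ≤ c(1)`, there exists `ρ ∈ [-1, 1]` with `c(ρ) = r`. -/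
theorem norta_matching_surjective (g₁ g₂ : ℝ → ℝ)
    (hg₁ : Monotone g₁) (hg₂ : Monotone g₂)
    (hg₁L2 : MemLp g₁ 2 (gaussianReal 0 1)) (hg₂L2 : MemLp g₂ 2 (gaussianReal 0 1))
    (c : ℝ → ℝ)
    (hc : c = fun ρ : ℝ =>
        ∫ z₁, ∫ z₂, g₁ z₁ * g₂ (ρ * z₁ + Real.sqrt (1 - ρ ^ 2) * z₂)
          ∂(gaussianReal 0 1) ∂(gaussianReal 0 1))
    (r : ℝ) (hr₁ : c (-1) ≤ r) (hr₂ : r ≤ c 1) :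
    ∃ ρ ∈ Set.Icc (-1 : ℝ) 1, c ρ = r := by
  set γ := gaussianReal 0 1 with hγ
  set μ2 := γ.prod γ with hμ2def
  set cP : ℝ → ℝ :=
    fun ρ => ∫ p, g₁ p.1 * g₂ (ρ * p.1 + Real.sqrt (1 - ρ^2) * p.2) ∂μ2 with hcP
  set cM : ℕ → ℝ → ℝ := fun M ρ => ∫ p, trunc M g₁ p.1
      * trunc M g₂ (ρ * p.1 + Real.sqrt (1 - ρ^2) * p.2) ∂μ2 with hcM
  have hEq : Set.EqOn c cP (Set.Icc (-1:ℝ) 1) := by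
    intro ρ hρ
    rw [hc]
    exact integral_integral (myMul_integrable (memL2_fst hg₁L2) (memL2_comp_W hρ hg₂L2))
  -- uniform convergence of the truncated versions
  have hunif : TendstoUniformlyOn cM cP atTop (Set.Icc (-1:ℝ) 1) := by
    rw [Metric.tendstoUniformlyOn_iff]
    intro ε hε
    set B₁ : ℝ := (∫ x, g₁ x ^2 ∂γ) ^ (1/2:ℝ) with hB₁
    set B₂ : ℝ := (∫ x, g₂ x ^2 ∂γ) ^ (1/2:ℝ) with hB₂
    set e : ℕ → ℝ := fun M => (∫ x, (g₁ x - trunc M g₁ x)^2 ∂γ) ^ (1/2:ℝ) * B₂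
        + B₁ * (∫ x, (g₂ x - trunc M g₂ x)^2 ∂γ) ^ (1/2:ℝ) with he
    have hsqrt0 : ContinuousAt (fun x : ℝ => x ^ (1/2:ℝ)) 0 :=
      (Real.continuousAt_rpow_const 0 (1/2:ℝ) (Or.inr (by norm_num)))
    have he1 : Filter.Tendsto (fun M : ℕ => (∫ x, (g₁ x - trunc M g₁ x)^2 ∂γ) ^ (1/2:ℝ))
        atTop (𝓝 0) := by
      have := hsqrt0.tendsto.comp (tendsto_trunc_sq_integral hg₁ hg₁L2)
      simpa [Function.comp_def, Real.zero_rpow (by norm_num : (1/2:ℝ) ≠ 0)] using this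
    have he2 : Filter.Tendsto (fun M : ℕ => (∫ x, (g₂ x - trunc M g₂ x)^2 ∂γ) ^ (1/2:ℝ))
        atTop (𝓝 0) := by
      have := hsqrt0.tendsto.comp (tendsto_trunc_sq_integral hg₂ hg₂L2)
      simpa [Function.comp_def, Real.zero_rpow (by norm_num : (1/2:ℝ) ≠ 0)] using this
    have heT : Filter.Tendsto e atTop (𝓝 0) := by
      have := (he1.mul_const B₂).add (he2.const_mul B₁)
      simpa only [zero_mul, mul_zero, add_zero] using this
    have hev : ∀ᶠ M : ℕ in atTop, e M < ε := heT.eventually_lt_const hε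
    filter_upwards [hev] with M hM ρ hρ
    rw [Real.dist_eq]
    calc |cP ρ - cM M ρ| ≤ e M := err_bound hg₁ hg₂ hg₁L2 hg₂L2 M hρ
    _ < ε := hM
  have hcontP : ContinuousOn cP (Set.Icc (-1:ℝ) 1) :=
    hunif.continuousOn (Filter.Eventually.of_forall fun M => contOn_trunc hg₁ hg₂ M).frequently
  have hcontc : ContinuousOn c (Set.Icc (-1:ℝ) 1) := hcontP.congr hEq
  have hsub := intermediate_value_Icc (by norm_num : (-1:ℝ) ≤ 1) hcontc
  obtain ⟨ρ, hρ, hρr⟩ := hsub ⟨hr₁, hr₂⟩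
  exact ⟨ρ, hρ, hρr⟩
end

section
/- Let A be a real symmetric n×n matrix with spectral decomposition A = Σᵢ λᵢ uᵢuᵢᵀ, where {uᵢ} is an orthonormal basis of eigenvectors with eigenvalues λᵢ. Define A₊ = Σᵢ max(λᵢ, 0) uᵢuᵢᵀ. Then A₊ is positive semidefinite and for every positive semidefinite matrix X one has ‖A − A₊‖_F ≤ ‖A − X‖_F; that is, truncating the negative eigenvalues of A yields a closest positive semidefinite matrix to A in Frobenius norm. -/
open Matrix

/-- The Frobenius norm of a real `n × n` matrix. -/
noncomputable def frobNorm {n : ℕ} (B : Matrix (Fin n) (Fin n) ℝ) : ℝ :=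
  Real.sqrt (∑ i, ∑ j, (B i j) ^ 2)

/-- Truncating the negative eigenvalues of a symmetric matrix yields a closest positive
semidefinite matrix in Frobenius norm: if `A = Σᵢ λᵢ uᵢuᵢᵀ` with `{uᵢ}` orthonormal and
`A₊ = Σᵢ max(λᵢ, 0) uᵢuᵢᵀ`, then `A₊` is positive semidefinite and
`‖A - A₊‖_F ≤ ‖A - X‖_F` for every positive semidefinite `X`. -/
theorem eigenvalue_truncation_closest_psd {n : ℕ}
    (A : Matrix (Fin n) (Fin n) ℝ)
    (u : Fin n → (Fin n → ℝ)) (lam : Fin n → ℝ)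
    (hortho : ∀ i j : Fin n, dotProduct (u i) (u j) = if i = j then 1 else 0)
    (hA : A = ∑ i, lam i • vecMulVec (u i) (u i)) :
    (∑ i, max (lam i) 0 • vecMulVec (u i) (u i)).PosSemidef ∧
    ∀ X : Matrix (Fin n) (Fin n) ℝ, X.PosSemidef →
      frobNorm (A - ∑ i, max (lam i) 0 • vecMulVec (u i) (u i)) ≤ frobNorm (A - X) := by
  classical
  set U : Matrix (Fin n) (Fin n) ℝ := Matrix.of u with hUdef
  have hUUT : U * Uᵀ = 1 := by
    ext i j
    simpa [hUdef, Matrix.of_apply, Matrix.mul_apply, Matrix.one_apply, dotProduct] using hortho i j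
  have hUTU : Uᵀ * U = 1 := mul_eq_one_comm.mp hUUT
  -- spectral-sum to matrix product
  have key : ∀ d : Fin n → ℝ,
      (∑ i, d i • vecMulVec (u i) (u i)) = Uᵀ * (Matrix.diagonal d) * U := by
    intro d
    ext a b
    rw [Matrix.sum_apply]
    simp only [Matrix.mul_apply, Matrix.diagonal_apply, Matrix.transpose_apply,
      Matrix.smul_apply, vecMulVec_apply, smul_eq_mul, mul_ite, mul_zero,
      Finset.sum_ite_eq', Finset.mem_univ, if_true]
    refine Finset.sum_congr rfl fun i _ => ?_
    simp only [hUdef, Matrix.of_apply]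
    ring
  have hconjU : Uᴴ = Uᵀ := by ext i j; simp [Matrix.conjTranspose_apply]
  have hconjUT : (Uᵀ)ᴴ = U := by ext i j; simp [Matrix.conjTranspose_apply]
  -- positive semidefiniteness of the truncation
  have hpsd : (∑ i, max (lam i) 0 • vecMulVec (u i) (u i)).PosSemidef := by
    rw [key]
    have hd : (Matrix.diagonal (fun i => max (lam i) 0)).PosSemidef :=
      Matrix.posSemidef_diagonal_iff.mpr fun i => le_max_right _ _
    have := hd.conjTranspose_mul_mul_same U
    rwa [hconjU] at this
  refine ⟨hpsd, ?_⟩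
  intro X hX
  -- trace formula for the squared Frobenius norm
  have gtrace : ∀ M : Matrix (Fin n) (Fin n) ℝ,
      (∑ i, ∑ j, (M i j) ^ 2) = (Mᵀ * M).trace := by
    intro M
    simp only [Matrix.trace, Matrix.diag, Matrix.mul_apply, Matrix.transpose_apply, sq]
    rw [Finset.sum_comm]
  have hUZ : ∀ Z : Matrix (Fin n) (Fin n) ℝ, U * (Uᵀ * Z) = Z := fun Z => by
    rw [← Matrix.mul_assoc, hUUT, Matrix.one_mul]
  have ginv : ∀ M : Matrix (Fin n) (Fin n) ℝ,
      (∑ i, ∑ j, ((Uᵀ * M * U) i j) ^ 2) = ∑ i, ∑ j, (M i j) ^ 2 := by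
    intro M
    rw [gtrace, gtrace]
    have e : (Uᵀ * M * U)ᵀ * (Uᵀ * M * U) = Uᵀ * (Mᵀ * (M * U)) := by
      simp only [Matrix.transpose_mul, Matrix.transpose_transpose, Matrix.mul_assoc, hUZ]
    rw [e, Matrix.trace_mul_comm, Matrix.mul_assoc, Matrix.mul_assoc, hUUT, Matrix.mul_one]
  set Y : Matrix (Fin n) (Fin n) ℝ := U * X * Uᵀ with hYdef
  have hXY : X = Uᵀ * Y * U := by
    rw [hYdef]
    calc X = (Uᵀ * U) * X * (Uᵀ * U) := by rw [hUTU, Matrix.one_mul, Matrix.mul_one]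
    _ = Uᵀ * (U * X * Uᵀ) * U := by simp only [Matrix.mul_assoc]
  have hYpsd : Y.PosSemidef := by
    have := hX.mul_mul_conjTranspose_same U
    rwa [hconjU] at this
  have hYdiag : ∀ i, 0 ≤ Y i i := by
    intro i
    have := hYpsd.dotProduct_mulVec_nonneg (Pi.single i 1)
    simpa [dotProduct, Matrix.mulVec, Pi.single_apply, Finset.sum_ite_eq,
      mul_comm] using this
  -- rewrite the two differences
  have hdiff1 : A - (∑ i, max (lam i) 0 • vecMulVec (u i) (u i))
      = Uᵀ * Matrix.diagonal (fun i => min (lam i) 0) * U := by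
    rw [hA, key, key]
    have hmin : Matrix.diagonal lam - Matrix.diagonal (fun i => max (lam i) 0)
        = Matrix.diagonal (fun i => min (lam i) 0) := by
      ext i j
      rcases eq_or_ne i j with rfl | hij
      swap
      · simp [Matrix.diagonal_apply_ne _ hij]
      simp only [Matrix.sub_apply, Matrix.diagonal_apply_eq]
      rcases le_total (lam i) 0 with h | h
      · rw [sup_eq_right.mpr h, inf_eq_left.mpr h, sub_zero]
      · rw [sup_eq_left.mpr h, inf_eq_right.mpr h, sub_self]
    rw [← hmin, Matrix.mul_sub, Matrix.sub_mul]
  have hdiff2 : A - X = Uᵀ * (Matrix.diagonal lam - Y) * U := by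
    rw [hA, key, hXY, Matrix.mul_sub, Matrix.sub_mul]
  -- compare the squared norms
  have hsum1 : (∑ i, ∑ j, ((A - (∑ i, max (lam i) 0 • vecMulVec (u i) (u i))) i j) ^ 2)
      = ∑ i, (min (lam i) 0) ^ 2 := by
    rw [hdiff1, ginv]
    simp [Matrix.diagonal_apply, apply_ite (· ^ 2), Finset.sum_ite_eq]
  have hpoint : ∀ i, (min (lam i) 0) ^ 2 ≤ (lam i - Y i i) ^ 2 := by
    intro i
    have hy := hYdiag i
    rcases le_total (lam i) 0 with h | h
    · rw [min_eq_left h]; nlinarith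
    · rw [min_eq_right h]; simpa using sq_nonneg (lam i - Y i i)
  have hsum2 : (∑ i, (min (lam i) 0) ^ 2)
      ≤ ∑ i, ∑ j, ((A - X) i j) ^ 2 := by
    rw [hdiff2, ginv]
    calc (∑ i, (min (lam i) 0) ^ 2)
        ≤ ∑ i, ((Matrix.diagonal lam - Y) i i) ^ 2 := by
          apply Finset.sum_le_sum
          intro i _
          simpa [Matrix.sub_apply, Matrix.diagonal_apply] using hpoint i
      _ ≤ ∑ i, ∑ j, ((Matrix.diagonal lam - Y) i j) ^ 2 := by
          apply Finset.sum_le_sum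
          intro i _
          exact Finset.single_le_sum (f := fun j => ((Matrix.diagonal lam - Y) i j) ^ 2)
            (fun j _ => sq_nonneg _) (Finset.mem_univ i)
  unfold frobNorm
  apply Real.sqrt_le_sqrt
  rw [hsum1]
  exact hsum2
end

section
/- Let π be a probability measure on ℝ × ℝ whose first and second marginals μ and ν each have finite second moments. Then ∫ x·y dπ(x,y) ≤ ∫₀¹ Q_μ(u) Q_ν(u) du, where Q_μ and Q_ν are the quantile functions of μ and ν; i.e., among all joint distributions with given marginals, the comonotone coupling (Q_μ(U), Q_ν(U)) with U uniform on (0,1) maximizes the expected product, and hence maximizes the correlation. (Upper Fréchet–Hoeffding bound: this identifies c(1) as the largest correlation attainable by the NORTA model for given marginals.) -/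
open MeasureTheory ProbabilityTheory Set Filter

set_option linter.unusedSectionVars false

/-- The quantile function (generalized inverse cdf) of a measure `μ` on `ℝ`:
`Q_μ(p) = inf {x : F_μ(x) ≥ p}`. -/
noncomputable def quantile (μ : Measure ℝ) (p : ℝ) : ℝ :=
  sInf {x : ℝ | p ≤ cdf μ x}

namespace FrechetAux

variable {μ : Measure ℝ} [IsProbabilityMeasure μ] {p x : ℝ}

lemma bddBelow_set (hp : 0 < p) : BddBelow {x : ℝ | p ≤ cdf μ x} := by
  obtain ⟨z, hz⟩ := ((tendsto_cdf_atBot μ).eventually_lt_const hp).exists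
  refine ⟨z, fun y hy => ?_⟩
  by_contra h
  push_neg at h
  exact absurd (hy.trans (monotone_cdf μ h.le)) (not_le.2 hz)

lemma nonempty_set (hp : p < 1) : {x : ℝ | p ≤ cdf μ x}.Nonempty := by
  obtain ⟨z, hz⟩ := ((tendsto_cdf_atTop μ).eventually_const_lt hp).exists
  exact ⟨z, hz.le⟩

lemma le_cdf_quantile (hp0 : 0 < p) (hp1 : p < 1) : p ≤ cdf μ (quantile μ p) := by
  set a := quantile μ p with ha
  have hne := nonempty_set (μ := μ) hp1
  have htend : Tendsto (cdf μ) (nhdsWithin a (Ioi a)) (nhds (cdf μ a)) :=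
    ((cdf μ).right_continuous a).mono_left (nhdsWithin_mono a Ioi_subset_Ici_self)
  refine ge_of_tendsto htend ?_
  filter_upwards [self_mem_nhdsWithin] with y hy
  obtain ⟨s, hs, hsy⟩ := exists_lt_of_csInf_lt hne (show sInf {x : ℝ | p ≤ cdf μ x} < y from hy)
  exact hs.trans (monotone_cdf μ hsy.le)

lemma quantile_le_iff (hp0 : 0 < p) (hp1 : p < 1) :
    quantile μ p ≤ x ↔ p ≤ cdf μ x := by
  constructor
  · intro h
    exact (le_cdf_quantile hp0 hp1).trans (monotone_cdf μ h)
  · intro h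
    exact csInf_le (bddBelow_set hp0) h

/-- Globally measurable modification of the quantile function. -/
noncomputable def qg (μ : Measure ℝ) (u : ℝ) : ℝ :=
  if u ∈ Ioo (0 : ℝ) 1 then quantile μ u else 0

lemma qg_eq (hu : u ∈ Ioo (0 : ℝ) 1) : qg μ u = quantile μ u := if_pos hu

lemma qg_le_iff {u : ℝ} (hu : u ∈ Ioo (0 : ℝ) 1) :
    qg μ u ≤ x ↔ u ≤ cdf μ x := by
  rw [qg_eq hu]; exact quantile_le_iff hu.1 hu.2

lemma lt_qg_iff {u : ℝ} (hu : u ∈ Ioo (0 : ℝ) 1) :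
    x < qg μ u ↔ cdf μ x < u := by
  rw [← not_le, ← not_le, not_iff_not]; exact qg_le_iff hu

lemma measurable_qg (μ : Measure ℝ) [IsProbabilityMeasure μ] : Measurable (qg μ) := by
  refine measurable_of_Iic fun x => ?_
  by_cases h0 : (0 : ℝ) ≤ x
  · have : qg μ ⁻¹' Iic x = (Ioo (0:ℝ) 1 ∩ Iic (cdf μ x)) ∪ (Ioo (0:ℝ) 1)ᶜ := by
      ext u
      by_cases hu : u ∈ Ioo (0:ℝ) 1
      · simp [hu, qg_le_iff (μ := μ) hu]
      · simp [hu, qg, h0]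
    rw [this]
    exact ((measurableSet_Ioo.inter measurableSet_Iic).union measurableSet_Ioo.compl)
  · have : qg μ ⁻¹' Iic x = Ioo (0:ℝ) 1 ∩ Iic (cdf μ x) := by
      ext u
      by_cases hu : u ∈ Ioo (0:ℝ) 1
      · simp [hu, qg_le_iff (μ := μ) hu]
      · simp [hu, qg, h0]
    rw [this]
    exact measurableSet_Ioo.inter measurableSet_Iic

/-- Inverse-CDF sampling: the quantile function pushes the uniform measure on `(0,1)` to `μ`. -/
lemma map_qg (μ : Measure ℝ) [IsProbabilityMeasure μ] :
    Measure.map (qg μ) (volume.restrict (Ioo (0:ℝ) 1)) = μ := by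
  have hprob : IsProbabilityMeasure (volume.restrict (Ioo (0:ℝ) 1)) :=
    ⟨by simp [Real.volume_Ioo]⟩
  refine Measure.ext_of_Iic _ _ fun x => ?_
  rw [Measure.map_apply (measurable_qg μ) measurableSet_Iic,
    Measure.restrict_apply (measurable_qg μ measurableSet_Iic)]
  have hset : qg μ ⁻¹' Iic x ∩ Ioo (0:ℝ) 1 = Iic (cdf μ x) ∩ Ioo (0:ℝ) 1 := by
    ext u
    by_cases hu : u ∈ Ioo (0:ℝ) 1
    · simp [hu, qg_le_iff (μ := μ) hu]
    · simp [hu]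
  rw [hset, ← ofReal_cdf μ x]
  rcases lt_or_ge (cdf μ x) 1 with hc | hc
  · have : Iic (cdf μ x) ∩ Ioo (0:ℝ) 1 = Ioc 0 (cdf μ x) := by
      ext u
      constructor
      · rintro ⟨h1, h2, h3⟩; exact ⟨h2, h1⟩
      · rintro ⟨h1, h2⟩; exact ⟨h2, h1, lt_of_le_of_lt h2 hc⟩
    rw [this, Real.volume_Ioc, sub_zero]
  · have hc1 : cdf μ x = 1 := le_antisymm (cdf_le_one μ x) hc
    have : Iic (cdf μ x) ∩ Ioo (0:ℝ) 1 = Ioo (0:ℝ) 1 := by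
      rw [hc1]
      refine inter_eq_self_of_subset_right fun u hu => hu.2.le
    rw [this, Real.volume_Ioo, hc1, sub_zero]

/-- The comonotone coupling of `μ` and `ν`. -/
noncomputable def como (μ ν : Measure ℝ) : Measure (ℝ × ℝ) :=
  Measure.map (fun u => (qg μ u, qg ν u)) (volume.restrict (Ioo (0:ℝ) 1))

variable {ν : Measure ℝ} [IsProbabilityMeasure ν]

lemma measurable_pair_qg (μ ν : Measure ℝ) [IsProbabilityMeasure μ] [IsProbabilityMeasure ν] :
    Measurable (fun u => (qg μ u, qg ν u)) :=
  (measurable_qg μ).prodMk (measurable_qg ν)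

instance : IsProbabilityMeasure (volume.restrict (Ioo (0:ℝ) 1)) := ⟨by simp [Real.volume_Ioo]⟩

instance : IsProbabilityMeasure (como μ ν) :=
  Measure.isProbabilityMeasure_map (measurable_pair_qg μ ν).aemeasurable

lemma como_fst : Measure.map Prod.fst (como μ ν) = μ := by
  rw [como, Measure.map_map measurable_fst (measurable_pair_qg μ ν)]
  exact map_qg μ

lemma como_snd : Measure.map Prod.snd (como μ ν) = ν := by
  rw [como, Measure.map_map measurable_snd (measurable_pair_qg μ ν)]
  exact map_qg ν

lemma measurableSet_event (s t : ℝ) : MeasurableSet {p : ℝ × ℝ | s < p.1 ∧ t < p.2} := by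
  have : {p : ℝ × ℝ | s < p.1 ∧ t < p.2} = Ioi s ×ˢ Ioi t := rfl
  rw [this]; exact measurableSet_Ioi.prod measurableSet_Ioi

lemma marginal_fst (ρ : Measure (ℝ × ℝ)) (hf : Measure.map Prod.fst ρ = μ) (s : ℝ) :
    ρ {p : ℝ × ℝ | s < p.1} = μ (Ioi s) := by
  rw [← hf, Measure.map_apply measurable_fst measurableSet_Ioi]; rfl

lemma marginal_snd (ρ : Measure (ℝ × ℝ)) (hf : Measure.map Prod.snd ρ = ν) (t : ℝ) :
    ρ {p : ℝ × ℝ | t < p.2} = ν (Ioi t) := by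
  rw [← hf, Measure.map_apply measurable_snd measurableSet_Ioi]; rfl

/-- The comonotone coupling achieves the upper Fréchet-Hoeffding bound on upper quadrants. -/
lemma event_le_como (ρ : Measure (ℝ × ℝ)) [IsProbabilityMeasure ρ]
    (hf : Measure.map Prod.fst ρ = μ) (hs : Measure.map Prod.snd ρ = ν) (s t : ℝ) :
    ρ {p : ℝ × ℝ | s < p.1 ∧ t < p.2} ≤ como μ ν {p : ℝ × ℝ | s < p.1 ∧ t < p.2} := by
  have h1 : ρ {p : ℝ × ℝ | s < p.1 ∧ t < p.2} ≤ μ (Ioi s) := by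
    rw [← marginal_fst ρ hf s]; exact measure_mono fun p hp => hp.1
  have h2 : ρ {p : ℝ × ℝ | s < p.1 ∧ t < p.2} ≤ ν (Ioi t) := by
    rw [← marginal_snd ρ hs t]; exact measure_mono fun p hp => hp.2
  -- compute the comonotone side
  have hRHS : como μ ν {p : ℝ × ℝ | s < p.1 ∧ t < p.2}
      = volume (Ioo (max (cdf μ s) (cdf ν t)) 1) := by
    rw [como, Measure.map_apply (measurable_pair_qg μ ν) (measurableSet_event s t),
      Measure.restrict_apply ((measurable_pair_qg μ ν) (measurableSet_event s t))]
    congr 1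
    ext u
    by_cases hu : u ∈ Ioo (0:ℝ) 1
    · simp only [mem_inter_iff, mem_preimage, mem_setOf_eq, hu, and_true,
        lt_qg_iff (μ := μ) hu, lt_qg_iff (μ := ν) hu, mem_Ioo, max_lt_iff]
      have := hu.2; tauto
    · simp only [mem_inter_iff, hu, and_false, false_iff]
      intro h
      exact hu ⟨lt_of_le_of_lt (cdf_nonneg μ s) (max_lt_iff.1 h.1).1, h.2⟩
  rw [hRHS, Real.volume_Ioo]
  rcases le_total (cdf ν t) (cdf μ s) with hm | hm
  · rw [max_eq_left hm]
    refine h1.trans ?_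
    have : μ (Ioi s) = 1 - μ (Iic s) := by
      rw [← prob_compl_eq_one_sub measurableSet_Iic, compl_Iic]
    rw [this, ← ofReal_cdf μ s]
    rw [ENNReal.ofReal_sub _ (cdf_nonneg μ s), ENNReal.ofReal_one]
  · rw [max_eq_right hm]
    refine h2.trans ?_
    have : ν (Ioi t) = 1 - ν (Iic t) := by
      rw [← prob_compl_eq_one_sub measurableSet_Iic, compl_Iic]
    rw [this, ← ofReal_cdf ν t]
    rw [ENNReal.ofReal_sub _ (cdf_nonneg ν t), ENNReal.ofReal_one]

/-- The kernel `fc x s = 1_{s < x} - 1_{s < 0}`, so that `∫ s, fc x s = x`. -/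
noncomputable def fc (x s : ℝ) : ℝ := (if s < x then 1 else 0) - (if s < 0 then 1 else 0)

lemma fc_eq_pos {x : ℝ} (hx : 0 ≤ x) : fc x = (Ico (0:ℝ) x).indicator 1 := by
  funext s
  unfold fc
  by_cases hs : s < 0
  · rw [indicator_of_notMem (fun h : s ∈ Ico (0:ℝ) x => absurd h.1 (not_le.2 hs)), if_pos hs,
      if_pos (lt_of_lt_of_le hs hx)]
    ring
  · rw [if_neg hs]
    by_cases hsx : s < x
    · rw [if_pos hsx, indicator_of_mem (mem_Ico.mpr ⟨not_lt.1 hs, hsx⟩)]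
      simp
    · rw [if_neg hsx, indicator_of_notMem (fun h : s ∈ Ico (0:ℝ) x => hsx h.2)]
      ring

lemma fc_eq_neg {x : ℝ} (hx : x < 0) : fc x = fun s => -((Ico x 0).indicator 1 s) := by
  funext s
  unfold fc
  by_cases hs : s < x
  · rw [if_pos hs, if_pos (hs.trans hx),
      indicator_of_notMem (fun h : s ∈ Ico x (0:ℝ) => absurd h.1 (not_le.2 hs))]
    ring
  · rw [if_neg hs]
    by_cases hs0 : s < 0
    · rw [if_pos hs0, indicator_of_mem (mem_Ico.mpr ⟨not_lt.1 hs, hs0⟩)]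
      simp
    · rw [if_neg hs0, indicator_of_notMem (fun h : s ∈ Ico x (0:ℝ) => hs0 h.2)]
      ring

lemma integrable_fc (x : ℝ) : Integrable (fc x) volume := by
  rcases le_or_gt 0 x with h | h
  · rw [fc_eq_pos h]
    rw [integrable_indicator_iff measurableSet_Ico]
    exact integrableOn_const measure_Ico_lt_top.ne
  · rw [fc_eq_neg h]
    refine Integrable.neg ?_
    rw [integrable_indicator_iff measurableSet_Ico]
    exact integrableOn_const measure_Ico_lt_top.ne

lemma integral_fc (x : ℝ) : ∫ s, fc x s = x := by
  rcases le_or_gt 0 x with h | h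
  · rw [fc_eq_pos h, integral_indicator measurableSet_Ico]
    simp [Real.volume_Ico, ENNReal.toReal_ofReal h, h]
  · rw [fc_eq_neg h]
    rw [integral_neg, integral_indicator measurableSet_Ico]
    simp only [Pi.one_apply, setIntegral_const, smul_eq_mul, mul_one, Real.volume_Ico]
    rw [measureReal_def, Real.volume_Ico, ENNReal.toReal_ofReal (by linarith)]
    ring

lemma integral_abs_fc (x : ℝ) : ∫ s, |fc x s| = |x| := by
  rcases le_or_gt 0 x with h | h
  · have : (fun s => |fc x s|) = fc x := by
      funext s
      rw [fc_eq_pos h]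
      exact abs_of_nonneg (indicator_nonneg (fun _ _ => zero_le_one) s)
    rw [this, integral_fc, abs_of_nonneg h]
  · have : (fun s => |fc x s|) = fun s => (Ico x 0).indicator 1 s := by
      funext s
      rw [fc_eq_neg h]
      rw [abs_neg]
      exact abs_of_nonneg (indicator_nonneg (fun _ _ => zero_le_one) s)
    rw [this]
    rw [integral_indicator measurableSet_Ico]
    simp only [Pi.one_apply, setIntegral_const, smul_eq_mul, mul_one, Real.volume_Ico]
    rw [measureReal_def, Real.volume_Ico, ENNReal.toReal_ofReal (by linarith), abs_of_neg h]
    ring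

lemma measurable_fc2 : Measurable (fun q : ℝ × ℝ => fc q.1 q.2) := by
  unfold fc
  refine Measurable.sub ?_ ?_
  · exact Measurable.ite (measurableSet_lt measurable_snd measurable_fst)
      measurable_const measurable_const
  · exact Measurable.ite (measurableSet_lt measurable_snd measurable_const)
      measurable_const measurable_const

lemma measurableSet_A (s : ℝ) : MeasurableSet {p : ℝ × ℝ | s < p.1} :=
  measurable_fst measurableSet_Ioi

lemma measurableSet_B (t : ℝ) : MeasurableSet {p : ℝ × ℝ | t < p.2} :=
  measurable_snd measurableSet_Ioi

lemma integral_fc_prod (ρ : Measure (ℝ × ℝ)) [IsProbabilityMeasure ρ] (s t : ℝ) :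
    ∫ p, fc p.1 s * fc p.2 t ∂ρ
      = (ρ {p : ℝ × ℝ | s < p.1 ∧ t < p.2}).toReal
        - (if t < 0 then (1:ℝ) else 0) * (ρ {p : ℝ × ℝ | s < p.1}).toReal
        - (if s < 0 then (1:ℝ) else 0) * (ρ {p : ℝ × ℝ | t < p.2}).toReal
        + (if s < 0 then (1:ℝ) else 0) * (if t < 0 then (1:ℝ) else 0) := by
  have hfun : (fun p : ℝ × ℝ => fc p.1 s * fc p.2 t)
      = fun p => ({p : ℝ × ℝ | s < p.1 ∧ t < p.2}.indicator 1 p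
          - (if t < 0 then (1:ℝ) else 0) * {p : ℝ × ℝ | s < p.1}.indicator 1 p)
          - ((if s < 0 then (1:ℝ) else 0) * {p : ℝ × ℝ | t < p.2}.indicator 1 p
          - (if s < 0 then (1:ℝ) else 0) * (if t < 0 then (1:ℝ) else 0)) := by
    funext p
    simp only [fc, indicator_apply, mem_setOf_eq, Pi.one_apply]
    by_cases h1 : s < p.1 <;> by_cases h2 : t < p.2 <;> by_cases h3 : s < 0 <;>
      by_cases h4 : t < 0 <;> simp [h1, h2, h3, h4] <;> ring
  have iE : Integrable ({p : ℝ × ℝ | s < p.1 ∧ t < p.2}.indicator (1 : ℝ × ℝ → ℝ)) ρ :=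
    (integrable_const 1).indicator (measurableSet_event s t)
  have iA : Integrable ({p : ℝ × ℝ | s < p.1}.indicator (1 : ℝ × ℝ → ℝ)) ρ :=
    (integrable_const 1).indicator (measurableSet_A s)
  have iB : Integrable ({p : ℝ × ℝ | t < p.2}.indicator (1 : ℝ × ℝ → ℝ)) ρ :=
    (integrable_const 1).indicator (measurableSet_B t)
  have i1 : Integrable (fun p : ℝ × ℝ => {p : ℝ × ℝ | s < p.1 ∧ t < p.2}.indicator 1 p
      - (if t < 0 then (1:ℝ) else 0) * {p : ℝ × ℝ | s < p.1}.indicator 1 p) ρ :=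
    iE.sub (iA.const_mul _)
  have i2 : Integrable (fun p : ℝ × ℝ => (if s < 0 then (1:ℝ) else 0)
      * {p : ℝ × ℝ | t < p.2}.indicator 1 p
      - (if s < 0 then (1:ℝ) else 0) * (if t < 0 then (1:ℝ) else 0)) ρ :=
    (iB.const_mul _).sub (integrable_const _)
  rw [hfun, integral_sub i1 i2,
    integral_sub iE (iA.const_mul _), integral_sub (iB.const_mul _) (integrable_const _),
    integral_const_mul, integral_const_mul,
    integral_indicator_one (measurableSet_event s t), integral_indicator_one (measurableSet_A s),
    integral_indicator_one (measurableSet_B t), integral_const]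
  simp only [measureReal_def, measure_univ, ENNReal.toReal_one, smul_eq_mul, one_mul, mul_one]
  ring

lemma integrable_fc_prod_prod (ρ : Measure (ℝ × ℝ)) [IsProbabilityMeasure ρ]
    (hint : Integrable (fun p : ℝ × ℝ => p.1 * p.2) ρ) :
    Integrable (fun z : (ℝ × ℝ) × (ℝ × ℝ) => fc z.1.1 z.2.1 * fc z.1.2 z.2.2)
      (ρ.prod (volume.prod volume)) := by
  have hmeas : AEStronglyMeasurable
      (fun z : (ℝ × ℝ) × (ℝ × ℝ) => fc z.1.1 z.2.1 * fc z.1.2 z.2.2)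
      (ρ.prod (volume.prod volume)) := by
    refine Measurable.aestronglyMeasurable ?_
    exact (measurable_fc2.comp ((measurable_fst.fst).prodMk (measurable_snd.fst))).mul
      (measurable_fc2.comp ((measurable_fst.snd).prodMk (measurable_snd.snd)))
  rw [integrable_prod_iff hmeas]
  constructor
  · refine Filter.Eventually.of_forall fun p => ?_
    exact (integrable_fc p.1).mul_prod (integrable_fc p.2)
  · have heq : (fun p : ℝ × ℝ => ∫ st : ℝ × ℝ, ‖fc p.1 st.1 * fc p.2 st.2‖ ∂(volume.prod volume))
        = fun p : ℝ × ℝ => |p.1 * p.2| := by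
      funext p
      have : (fun st : ℝ × ℝ => ‖fc p.1 st.1 * fc p.2 st.2‖)
          = fun st : ℝ × ℝ => |fc p.1 st.1| * |fc p.2 st.2| := by
        funext st
        rw [Real.norm_eq_abs, abs_mul]
      rw [this, integral_prod_mul (fun s => |fc p.1 s|) (fun t => |fc p.2 t|),
        integral_abs_fc, integral_abs_fc, abs_mul]
    rw [heq]
    exact hint.abs

/-- Hoeffding-type representation via Fubini. -/
lemma integral_mul_eq (ρ : Measure (ℝ × ℝ)) [IsProbabilityMeasure ρ]
    (hint : Integrable (fun p : ℝ × ℝ => p.1 * p.2) ρ) :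
    ∫ p : ℝ × ℝ, p.1 * p.2 ∂ρ
      = ∫ st : ℝ × ℝ, (∫ p : ℝ × ℝ, fc p.1 st.1 * fc p.2 st.2 ∂ρ) ∂(volume.prod volume) := by
  have h1 : ∀ p : ℝ × ℝ,
      p.1 * p.2 = ∫ st : ℝ × ℝ, fc p.1 st.1 * fc p.2 st.2 ∂(volume.prod volume) := by
    intro p
    rw [integral_prod_mul (fun s => fc p.1 s) (fun t => fc p.2 t), integral_fc, integral_fc]
  calc ∫ p : ℝ × ℝ, p.1 * p.2 ∂ρ
      = ∫ p : ℝ × ℝ, (∫ st : ℝ × ℝ, fc p.1 st.1 * fc p.2 st.2 ∂(volume.prod volume)) ∂ρ := by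
        exact integral_congr_ae (Filter.Eventually.of_forall fun p => h1 p)
    _ = ∫ st : ℝ × ℝ, (∫ p : ℝ × ℝ, fc p.1 st.1 * fc p.2 st.2 ∂ρ) ∂(volume.prod volume) :=
        integral_integral_swap (integrable_fc_prod_prod ρ hint)

lemma integrable_mul_marginals (ρ : Measure (ℝ × ℝ)) [IsProbabilityMeasure ρ]
    (hf : Measure.map Prod.fst ρ = μ) (hs : Measure.map Prod.snd ρ = ν)
    (hμ2 : Integrable (fun x : ℝ => x ^ 2) μ) (hν2 : Integrable (fun x : ℝ => x ^ 2) ν) :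
    Integrable (fun p : ℝ × ℝ => p.1 * p.2) ρ := by
  have h1 : Integrable (fun p : ℝ × ℝ => p.1 ^ 2) ρ := by
    rw [← hf] at hμ2
    exact (integrable_map_measure ((measurable_id.pow_const 2).aestronglyMeasurable)
      measurable_fst.aemeasurable).1 hμ2
  have h2 : Integrable (fun p : ℝ × ℝ => p.2 ^ 2) ρ := by
    rw [← hs] at hν2
    exact (integrable_map_measure ((measurable_id.pow_const 2).aestronglyMeasurable)
      measurable_snd.aemeasurable).1 hν2
  refine Integrable.mono' ((h1.add h2).div_const 2)
    ((measurable_fst.mul measurable_snd).aestronglyMeasurable) ?_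
  refine Filter.Eventually.of_forall fun p => ?_
  simp only [Pi.add_apply]
  rw [Real.norm_eq_abs]
  refine abs_le.2 ⟨by nlinarith [sq_nonneg (p.1 + p.2)], by nlinarith [sq_nonneg (p.1 - p.2)]⟩

end FrechetAux

open FrechetAux in
/-- Upper Fréchet–Hoeffding bound: for any coupling `π` of marginals `μ, ν` with finite second
moments, `∫ x y dπ ≤ ∫₀¹ Q_μ(u) Q_ν(u) du`; the comonotone coupling maximizes the expected
product. -/
theorem integral_mul_le_comonotone (π : Measure (ℝ × ℝ)) [IsProbabilityMeasure π]
    (μ ν : Measure ℝ)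
    (hμ : Measure.map Prod.fst π = μ) (hν : Measure.map Prod.snd π = ν)
    (hμ2 : Integrable (fun x : ℝ => x ^ 2) μ) (hν2 : Integrable (fun x : ℝ => x ^ 2) ν) :
    (∫ p : ℝ × ℝ, p.1 * p.2 ∂π) ≤
      ∫ u in Set.Ioo (0 : ℝ) 1, quantile μ u * quantile ν u := by
  haveI : IsProbabilityMeasure μ := by
    rw [← hμ]; exact Measure.isProbabilityMeasure_map measurable_fst.aemeasurable
  haveI : IsProbabilityMeasure ν := by
    rw [← hν]; exact Measure.isProbabilityMeasure_map measurable_snd.aemeasurable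
  have hintπ : Integrable (fun p : ℝ × ℝ => p.1 * p.2) π :=
    integrable_mul_marginals π hμ hν hμ2 hν2
  have hintc : Integrable (fun p : ℝ × ℝ => p.1 * p.2) (como μ ν) :=
    integrable_mul_marginals (como μ ν) como_fst como_snd hμ2 hν2
  have key : (∫ p : ℝ × ℝ, p.1 * p.2 ∂π) ≤ ∫ p : ℝ × ℝ, p.1 * p.2 ∂(como μ ν) := by
    rw [integral_mul_eq π hintπ, integral_mul_eq (como μ ν) hintc]
    refine integral_mono ((integrable_fc_prod_prod π hintπ).integral_prod_right)
      ((integrable_fc_prod_prod (como μ ν) hintc).integral_prod_right) fun st => ?_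
    rw [integral_fc_prod π st.1 st.2, integral_fc_prod (como μ ν) st.1 st.2,
      marginal_fst π hμ st.1, marginal_snd π hν st.2,
      marginal_fst (como μ ν) como_fst st.1, marginal_snd (como μ ν) como_snd st.2]
    have hev : ((π {p : ℝ × ℝ | st.1 < p.1 ∧ st.2 < p.2}).toReal)
        ≤ (como μ ν {p : ℝ × ℝ | st.1 < p.1 ∧ st.2 < p.2}).toReal :=
      ENNReal.toReal_mono (measure_ne_top _ _) (event_le_como π hμ hν st.1 st.2)
    linarith
  refine key.trans_eq ?_
  rw [como, integral_map (measurable_pair_qg μ ν).aemeasurable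
    (f := fun p : ℝ × ℝ => p.1 * p.2)
    ((measurable_fst.mul measurable_snd).aestronglyMeasurable)]
  exact setIntegral_congr_fun measurableSet_Ioo fun u hu => by
    simp only [Function.comp]
    rw [qg_eq hu, qg_eq hu]
end

section
/- Let π be a probability measure on ℝ × ℝ whose first and second marginals μ and ν each have finite second moments. Then ∫ x·y dπ(x,y) ≥ ∫₀¹ Q_μ(u) Q_ν(1−u) du, where Q_μ and Q_ν are the quantile functions of μ and ν; i.e., the countermonotone coupling (Q_μ(U), Q_ν(1−U)) with U uniform on (0,1) minimizes the expected product among all couplings with the given marginals. (Lower Fréchet–Hoeffding bound: this identifies c(−1) as the smallest correlation attainable by the NORTA model for given marginals.) -/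
open MeasureTheory ProbabilityTheory

open Set Filter Topology
open scoped Classical

variable {m : Measure ℝ} [IsProbabilityMeasure m]

lemma quantile_set_nonempty (hp : (p:ℝ) < 1) : {x : ℝ | p ≤ cdf m x}.Nonempty := by
  have h := tendsto_cdf_atTop m
  have : ∀ᶠ x in atTop, p ≤ cdf m x := h.eventually (eventually_ge_nhds hp)
  obtain ⟨x, hx⟩ := this.exists
  exact ⟨x, hx⟩

lemma quantile_set_bddBelow (hp : (0:ℝ) < p) : BddBelow {x : ℝ | p ≤ cdf m x} := by
  have h := tendsto_cdf_atBot m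
  have : ∀ᶠ x in atBot, cdf m x < p := h.eventually (eventually_lt_nhds hp)
  obtain ⟨y, hy⟩ := eventually_atBot.mp this
  exact ⟨y, fun x hx => by by_contra hc; exact absurd hx (not_le.2 (hy x (le_of_not_ge hc)))⟩

lemma quantile_le_iff (hp0 : (0:ℝ) < p) (hp1 : p < 1) {x : ℝ} :
    quantile m p ≤ x ↔ p ≤ cdf m x := by
  constructor
  · intro h
    have key : ∀ y, x < y → p ≤ cdf m y := by
      intro y hy
      obtain ⟨z, hz, hzy⟩ := exists_lt_of_csInf_lt (quantile_set_nonempty hp1) (lt_of_le_of_lt h hy)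
      exact hz.trans (monotone_cdf m hzy.le)
    have hc : ContinuousWithinAt (cdf m) (Ici x) x := (cdf m).right_continuous x
    have : Tendsto (cdf m) (𝓝[>] x) (𝓝 (cdf m x)) := hc.tendsto.mono_left (nhdsWithin_mono _ Ioi_subset_Ici_self)
    exact ge_of_tendsto this (eventually_nhdsWithin_of_forall (fun y hy => key y hy))
  · intro h
    exact csInf_le (quantile_set_bddBelow hp0) h

lemma lt_quantile_iff (hp0 : (0:ℝ) < p) (hp1 : p < 1) {x : ℝ} :
    x < quantile m p ↔ cdf m x < p := by
  rw [← not_le, ← not_le, quantile_le_iff hp0 hp1]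

lemma measurable_indicator_quantile :
    Measurable ((Ioo (0:ℝ) 1).indicator (quantile m)) := by
  apply measurable_of_Iic
  intro x
  have : (Ioo (0:ℝ) 1).indicator (quantile m) ⁻¹' Iic x =
      (Ioo 0 1 ∩ Iic (cdf m x)) ∪ ((Ioo 0 1)ᶜ ∩ {u : ℝ | (0:ℝ) ≤ x}) := by
    ext u
    by_cases hu : u ∈ Ioo (0:ℝ) 1
    · simp only [mem_preimage, mem_Iic, indicator_of_mem hu, mem_union, mem_inter_iff, hu,
        true_and, mem_compl_iff, not_true_eq_false, false_and, or_false, mem_setOf_eq]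
      exact quantile_le_iff hu.1 hu.2
    · simp [indicator_of_notMem hu, hu]
  rw [this]
  have hx : MeasurableSet {u : ℝ | (0:ℝ) ≤ x} := by
    by_cases h : (0:ℝ) ≤ x
    · have : {u : ℝ | (0:ℝ) ≤ x} = univ := by ext; simp [h]
      rw [this]; exact MeasurableSet.univ
    · have : {u : ℝ | (0:ℝ) ≤ x} = ∅ := by ext; simp [h]
      rw [this]; exact MeasurableSet.empty
  exact ((measurableSet_Ioo.inter measurableSet_Iic).union (measurableSet_Ioo.compl.inter hx))

lemma aemeasurable_quantile :
    AEMeasurable (quantile m) (volume.restrict (Ioo (0:ℝ) 1)) :=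
  (aemeasurable_indicator_iff measurableSet_Ioo).mp
    measurable_indicator_quantile.aemeasurable

instance : IsProbabilityMeasure (volume.restrict (Ioo (0:ℝ) 1)) :=
  ⟨by simp [Real.volume_Ioo]⟩

lemma vol_inter_Iic {c : ℝ} (h0 : 0 ≤ c) (h1 : c ≤ 1) :
    volume (Iic c ∩ Ioo (0:ℝ) 1) = ENNReal.ofReal c := by
  rcases lt_or_eq_of_le h1 with h1 | h1
  · have : Iic c ∩ Ioo (0:ℝ) 1 = Ioc 0 c := by
      ext u; constructor
      · rintro ⟨h, hu1, hu2⟩; exact ⟨hu1, h⟩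
      · rintro ⟨hu1, hu2⟩; exact ⟨hu2, hu1, lt_of_le_of_lt hu2 h1⟩
    rw [this, Real.volume_Ioc, sub_zero]
  · have : Iic c ∩ Ioo (0:ℝ) 1 = Ioo 0 1 := by
      ext u; constructor
      · rintro ⟨h, hu⟩; exact hu
      · rintro ⟨hu1, hu2⟩; exact ⟨h1 ▸ hu2.le, hu1, hu2⟩
    rw [this, Real.volume_Ioo, ← h1]; norm_num

lemma map_quantile : Measure.map (quantile m) (volume.restrict (Ioo (0:ℝ) 1)) = m := by
  have hmap : IsProbabilityMeasure (Measure.map (quantile m) (volume.restrict (Ioo (0:ℝ) 1))) :=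
    Measure.isProbabilityMeasure_map aemeasurable_quantile
  refine Measure.ext_of_Iic _ _ (fun x => ?_)
  rw [Measure.map_apply_of_aemeasurable aemeasurable_quantile measurableSet_Iic,
    Measure.restrict_apply' measurableSet_Ioo]
  have hset : quantile m ⁻¹' Iic x ∩ Ioo 0 1 = Iic (cdf m x) ∩ Ioo (0:ℝ) 1 := by
    ext u
    simp only [mem_inter_iff, mem_preimage, mem_Iic, and_congr_left_iff]
    intro hu
    exact quantile_le_iff hu.1 hu.2
  rw [hset, vol_inter_Iic (cdf_nonneg m x) (cdf_le_one m x), ofReal_cdf]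

lemma measurePreserving_one_sub :
    MeasurePreserving (fun u : ℝ => 1 - u) (volume.restrict (Ioo (0:ℝ) 1))
      (volume.restrict (Ioo (0:ℝ) 1)) := by
  have h : MeasurePreserving (fun u : ℝ => 1 - u) volume volume := by
    have := (measurePreserving_add_left (volume : Measure ℝ) 1).comp
      (Measure.measurePreserving_neg (volume : Measure ℝ))
    simpa [Function.comp_def, sub_eq_add_neg] using this
  have hpre : (fun u : ℝ => 1 - u) ⁻¹' Ioo 0 1 = Ioo 0 1 := by
    ext u; simp only [mem_preimage, mem_Ioo]; constructor <;> (rintro ⟨h1, h2⟩; constructor <;> linarith)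
  have := h.restrict_preimage (measurableSet_Ioo (a := (0:ℝ)) (b := 1))
  rwa [hpre] at this

lemma map_one_sub : Measure.map (fun u : ℝ => 1 - u) (volume.restrict (Ioo (0:ℝ) 1))
    = volume.restrict (Ioo (0:ℝ) 1) := measurePreserving_one_sub.map_eq

lemma aemeasurable_quantile_one_sub :
    AEMeasurable (fun u => quantile m (1 - u)) (volume.restrict (Ioo (0:ℝ) 1)) := by
  have h : AEMeasurable (quantile m)
      (Measure.map (fun u : ℝ => 1 - u) (volume.restrict (Ioo (0:ℝ) 1))) := by
    rw [map_one_sub]; exact aemeasurable_quantile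
  exact h.comp_aemeasurable (measurable_const.sub measurable_id).aemeasurable

lemma map_quantile_one_sub :
    Measure.map (fun u => quantile m (1 - u)) (volume.restrict (Ioo (0:ℝ) 1)) = m := by
  have h : AEMeasurable (quantile m)
      (Measure.map (fun u : ℝ => 1 - u) (volume.restrict (Ioo (0:ℝ) 1))) := by
    rw [map_one_sub]; exact aemeasurable_quantile
  have := AEMeasurable.map_map_of_aemeasurable h
    (measurable_const.sub measurable_id).aemeasurable
  rw [map_one_sub] at this
  rw [show (fun u => quantile m (1 - u)) = quantile m ∘ (fun u : ℝ => 1 - u) from rfl, ← this,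
    map_quantile]

/-! ### The kernel `K` -/

noncomputable def Kk (x s : ℝ) : ℝ := (if s < x then 1 else 0) - (if s < 0 then 1 else 0)

lemma Kk_eq (x s : ℝ) :
    Kk x s = (Ico (0:ℝ) x).indicator 1 s - (Ico x (0:ℝ)).indicator 1 s := by
  simp only [Kk, indicator_apply, mem_Ico, Pi.one_apply]
  rcases lt_or_ge s x with h1 | h1 <;> rcases lt_or_ge s 0 with h0 | h0 <;>
    (split_ifs <;> simp_all <;> linarith)

lemma integrable_indicator_Ico (a b : ℝ) :
    Integrable ((Ico a b).indicator (1 : ℝ → ℝ)) volume := by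
  rw [integrable_indicator_iff measurableSet_Ico]
  exact integrableOn_const (by rw [Real.volume_Ico]; exact ENNReal.ofReal_ne_top)

lemma integrable_Kk (x : ℝ) : Integrable (Kk x) volume := by
  have : Kk x = fun s => (Ico (0:ℝ) x).indicator 1 s - (Ico x (0:ℝ)).indicator 1 s :=
    funext fun s => Kk_eq x s
  rw [this]
  exact (integrable_indicator_Ico 0 x).sub (integrable_indicator_Ico x 0)

lemma integral_indicator_Ico (a b : ℝ) :
    ∫ s, (Ico a b).indicator (1 : ℝ → ℝ) s = (volume (Ico a b)).toReal := by
  exact integral_indicator_one measurableSet_Ico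

lemma integral_Kk (x : ℝ) : ∫ s, Kk x s = x := by
  have h : ∫ s, Kk x s = (volume (Ico (0:ℝ) x)).toReal - (volume (Ico x (0:ℝ))).toReal := by
    simp_rw [Kk_eq]
    rw [integral_sub (integrable_indicator_Ico 0 x) (integrable_indicator_Ico x 0),
      integral_indicator_Ico, integral_indicator_Ico]
  rw [h, Real.volume_Ico, Real.volume_Ico]
  rcases le_or_gt 0 x with hx | hx
  · rw [ENNReal.toReal_ofReal (by linarith), ENNReal.ofReal_of_nonpos (by linarith)]
    simp
  · rw [ENNReal.ofReal_of_nonpos (by linarith), ENNReal.toReal_ofReal (by linarith)]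
    simp

lemma integral_abs_Kk (x : ℝ) : ∫ s, |Kk x s| = |x| := by
  rcases le_or_gt 0 x with hx | hx
  · have h : ∀ s, |Kk x s| = (Ico (0:ℝ) x).indicator 1 s := by
      intro s
      rw [Kk_eq]
      rw [Ico_eq_empty (by linarith : ¬ x < 0)]
      simp only [indicator_empty, Pi.zero_apply, sub_zero]
      rw [abs_of_nonneg (indicator_nonneg (by intro a _; norm_num) s)]
    simp_rw [h]
    rw [integral_indicator_Ico, Real.volume_Ico, ENNReal.toReal_ofReal (by linarith),
      sub_zero, abs_of_nonneg hx]
  · have h : ∀ s, |Kk x s| = (Ico x (0:ℝ)).indicator 1 s := by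
      intro s
      rw [Kk_eq]
      rw [Ico_eq_empty (by linarith : ¬ (0:ℝ) < x)]
      simp only [indicator_empty, Pi.zero_apply, zero_sub, abs_neg]
      rw [abs_of_nonneg (indicator_nonneg (by intro a _; norm_num) s)]
    simp_rw [h]
    rw [integral_indicator_Ico, Real.volume_Ico, ENNReal.toReal_ofReal (by linarith),
      zero_sub, abs_of_neg hx]

lemma measurable_Kk2 : Measurable (fun q : ℝ × ℝ => Kk q.1 q.2) := by
  apply Measurable.sub
  · exact Measurable.ite (measurableSet_lt measurable_snd measurable_fst)
      measurable_const measurable_const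
  · exact Measurable.ite (measurableSet_lt measurable_snd measurable_const)
      measurable_const measurable_const

/-! ### Hoeffding representation -/

section Hoeffding

variable (π : Measure (ℝ × ℝ)) [IsProbabilityMeasure π]

lemma integrable_sq_fst (h : Integrable (fun x : ℝ => x ^ 2) (Measure.map Prod.fst π)) :
    Integrable (fun p : ℝ × ℝ => p.1 ^ 2) π := by
  have := (integrable_map_measure (f := Prod.fst) (μ := π)
    (measurable_id.pow_const 2).aestronglyMeasurable measurable_fst.aemeasurable).mp h
  simpa [Function.comp_def] using this

lemma integrable_sq_snd (h : Integrable (fun x : ℝ => x ^ 2) (Measure.map Prod.snd π)) :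
    Integrable (fun p : ℝ × ℝ => p.2 ^ 2) π := by
  have := (integrable_map_measure (f := Prod.snd) (μ := π)
    (measurable_id.pow_const 2).aestronglyMeasurable measurable_snd.aemeasurable).mp h
  simpa [Function.comp_def] using this

lemma integrable_abs_mul (h1 : Integrable (fun p : ℝ × ℝ => p.1 ^ 2) π)
    (h2 : Integrable (fun p : ℝ × ℝ => p.2 ^ 2) π) :
    Integrable (fun p : ℝ × ℝ => |p.1| * |p.2|) π := by
  refine Integrable.mono ((h1.add h2).div_const 2)
    ((measurable_fst.abs.mul measurable_snd.abs).aestronglyMeasurable) ?_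
  refine Eventually.of_forall fun p => ?_
  have : |p.1| * |p.2| ≤ (p.1 ^ 2 + p.2 ^ 2) / 2 := by
    nlinarith [sq_nonneg (|p.1| - |p.2|), sq_abs p.1, sq_abs p.2, abs_nonneg p.1, abs_nonneg p.2]
  rw [Real.norm_eq_abs, Real.norm_eq_abs, abs_of_nonneg (by positivity)]
  exact this.trans (le_abs_self _)

lemma integrable_mul (h1 : Integrable (fun p : ℝ × ℝ => p.1 ^ 2) π)
    (h2 : Integrable (fun p : ℝ × ℝ => p.2 ^ 2) π) :
    Integrable (fun p : ℝ × ℝ => p.1 * p.2) π := by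
  refine Integrable.mono (integrable_abs_mul π h1 h2)
    ((measurable_fst.mul measurable_snd).aestronglyMeasurable) ?_
  refine Eventually.of_forall fun p => ?_
  rw [Real.norm_eq_abs, Real.norm_eq_abs, abs_mul]
  exact le_abs_self _

/-- The double-indicator kernel integrand. -/
noncomputable def Hker : (ℝ × ℝ) × (ℝ × ℝ) → ℝ := fun q => Kk q.1.1 q.2.1 * Kk q.1.2 q.2.2

lemma measurable_Hker : Measurable Hker := by
  apply Measurable.mul
  · exact measurable_Kk2.comp ((measurable_fst.fst).prodMk (measurable_snd.fst))
  · exact measurable_Kk2.comp ((measurable_fst.snd).prodMk (measurable_snd.snd))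

lemma integrable_Hker (h1 : Integrable (fun p : ℝ × ℝ => p.1 ^ 2) π)
    (h2 : Integrable (fun p : ℝ × ℝ => p.2 ^ 2) π) :
    Integrable Hker (π.prod (volume.prod volume)) := by
  rw [integrable_prod_iff measurable_Hker.aestronglyMeasurable]
  constructor
  · exact Eventually.of_forall fun p => (integrable_Kk p.1).mul_prod (integrable_Kk p.2)
  · have : (fun p : ℝ × ℝ => ∫ z : ℝ × ℝ, ‖Hker (p, z)‖ ∂(volume.prod volume)) =
        fun p : ℝ × ℝ => |p.1| * |p.2| := by
      funext p
      have : (fun z : ℝ × ℝ => ‖Hker (p, z)‖) = fun z : ℝ × ℝ => |Kk p.1 z.1| * |Kk p.2 z.2| := by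
        funext z; rw [Hker, Real.norm_eq_abs, abs_mul]
      rw [this, integral_prod_mul (fun s => |Kk p.1 s|) (fun t => |Kk p.2 t|),
        integral_abs_Kk, integral_abs_Kk]
    rw [this]
    exact integrable_abs_mul π h1 h2

/-- The integrated kernel. -/
noncomputable def gker (π : Measure (ℝ × ℝ)) (z : ℝ × ℝ) : ℝ :=
  ∫ p : ℝ × ℝ, Kk p.1 z.1 * Kk p.2 z.2 ∂π

lemma hoeffding_repr (h1 : Integrable (fun p : ℝ × ℝ => p.1 ^ 2) π)
    (h2 : Integrable (fun p : ℝ × ℝ => p.2 ^ 2) π) :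
    ∫ p : ℝ × ℝ, p.1 * p.2 ∂π = ∫ z : ℝ × ℝ, gker π z ∂(volume.prod volume) := by
  have step1 : ∫ p : ℝ × ℝ, p.1 * p.2 ∂π =
      ∫ p : ℝ × ℝ, (∫ z : ℝ × ℝ, Kk p.1 z.1 * Kk p.2 z.2 ∂(volume.prod volume)) ∂π := by
    congr 1
    funext p
    rw [integral_prod_mul (fun s => Kk p.1 s) (fun t => Kk p.2 t), integral_Kk, integral_Kk]
  rw [step1]
  exact integral_integral_swap (integrable_Hker π h1 h2)

lemma integrable_gker (h1 : Integrable (fun p : ℝ × ℝ => p.1 ^ 2) π)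
    (h2 : Integrable (fun p : ℝ × ℝ => p.2 ^ 2) π) :
    Integrable (gker π) (volume.prod volume) :=
  (integrable_Hker π h1 h2).integral_prod_right

end Hoeffding

/-! ### Expansion of `gker` in terms of marginals -/

section Expand

variable (π : Measure (ℝ × ℝ)) [IsProbabilityMeasure π]

lemma integrable_ite_mem {α : Type*} [MeasurableSpace α] (μ : Measure α) [IsFiniteMeasure μ]
    {A : Set α} [∀ p, Decidable (p ∈ A)] (hA : MeasurableSet A) :
    Integrable (fun p => if p ∈ A then (1:ℝ) else 0) μ := by
  have : (fun p => if p ∈ A then (1:ℝ) else 0) = A.indicator 1 := by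
    funext p; by_cases h : p ∈ A <;> simp [indicator_apply, h]
  rw [this, integrable_indicator_iff hA]
  exact integrableOn_const (measure_ne_top μ A)

lemma integral_ite_mem {α : Type*} [MeasurableSpace α] (μ : Measure α) {A : Set α}
    [∀ p, Decidable (p ∈ A)] (hA : MeasurableSet A) :
    ∫ p, (if p ∈ A then (1:ℝ) else 0) ∂μ = (μ A).toReal := by
  have : (fun p => if p ∈ A then (1:ℝ) else 0) = A.indicator 1 := by
    funext p; by_cases h : p ∈ A <;> simp [indicator_apply, h]
  rw [this, integral_indicator_one hA]; rfl

lemma measurableSet_S (z : ℝ × ℝ) : MeasurableSet {q : ℝ × ℝ | z.1 < q.1 ∧ z.2 < q.2} :=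
  (measurableSet_lt measurable_const measurable_fst).inter
    (measurableSet_lt measurable_const measurable_snd)

lemma gker_eq (z : ℝ × ℝ) :
    gker π z = (π {q : ℝ × ℝ | z.1 < q.1 ∧ z.2 < q.2}).toReal
      - (if z.2 < 0 then (1:ℝ) else 0) * ((Measure.map Prod.fst π) (Ioi z.1)).toReal
      - (if z.1 < 0 then (1:ℝ) else 0) * ((Measure.map Prod.snd π) (Ioi z.2)).toReal
      + (if z.1 < 0 then (1:ℝ) else 0) * (if z.2 < 0 then (1:ℝ) else 0) := by
  have hS := measurableSet_S z
  have hS1 : MeasurableSet {q : ℝ × ℝ | z.1 < q.1} :=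
    measurableSet_lt measurable_const measurable_fst
  have hS2 : MeasurableSet {q : ℝ × ℝ | z.2 < q.2} :=
    measurableSet_lt measurable_const measurable_snd
  have expand : (fun p : ℝ × ℝ => Kk p.1 z.1 * Kk p.2 z.2) = fun p : ℝ × ℝ =>
      ((if p ∈ {q : ℝ × ℝ | z.1 < q.1 ∧ z.2 < q.2} then (1:ℝ) else 0)
      - (if z.2 < 0 then (1:ℝ) else 0) * (if p ∈ {q : ℝ × ℝ | z.1 < q.1} then (1:ℝ) else 0)
      - (if z.1 < 0 then (1:ℝ) else 0) * (if p ∈ {q : ℝ × ℝ | z.2 < q.2} then (1:ℝ) else 0))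
      + (if z.1 < 0 then (1:ℝ) else 0) * (if z.2 < 0 then (1:ℝ) else 0) := by
    funext p
    simp only [Kk, mem_setOf_eq]
    split_ifs <;> simp_all <;> ring
  rw [gker, expand]
  have i1 := integrable_ite_mem π hS
  have i2 : Integrable (fun p : ℝ × ℝ =>
      (if z.2 < 0 then (1:ℝ) else 0) * (if p ∈ {q : ℝ × ℝ | z.1 < q.1} then (1:ℝ) else 0)) π :=
    (integrable_ite_mem π hS1).const_mul _
  have i3 : Integrable (fun p : ℝ × ℝ =>
      (if z.1 < 0 then (1:ℝ) else 0) * (if p ∈ {q : ℝ × ℝ | z.2 < q.2} then (1:ℝ) else 0)) π :=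
    (integrable_ite_mem π hS2).const_mul _
  have i12 : Integrable (fun p : ℝ × ℝ =>
      (if p ∈ {q : ℝ × ℝ | z.1 < q.1 ∧ z.2 < q.2} then (1:ℝ) else 0)
      - (if z.2 < 0 then (1:ℝ) else 0) * (if p ∈ {q : ℝ × ℝ | z.1 < q.1} then (1:ℝ) else 0)) π :=
    (i1.sub i2).congr (MeasureTheory.ae_of_all _ fun p => rfl)
  have i123 : Integrable (fun p : ℝ × ℝ =>
      (if p ∈ {q : ℝ × ℝ | z.1 < q.1 ∧ z.2 < q.2} then (1:ℝ) else 0)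
      - (if z.2 < 0 then (1:ℝ) else 0) * (if p ∈ {q : ℝ × ℝ | z.1 < q.1} then (1:ℝ) else 0)
      - (if z.1 < 0 then (1:ℝ) else 0) * (if p ∈ {q : ℝ × ℝ | z.2 < q.2} then (1:ℝ) else 0)) π :=
    (i12.sub i3).congr (MeasureTheory.ae_of_all _ fun p => rfl)
  rw [integral_add i123 (integrable_const _), integral_sub i12 i3,
    integral_sub i1 i2, integral_const, integral_const_mul, integral_const_mul,
    integral_ite_mem π hS, integral_ite_mem π hS1, integral_ite_mem π hS2]
  have m1 : (Measure.map Prod.fst π) (Ioi z.1) = π {q : ℝ × ℝ | z.1 < q.1} := by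
    rw [Measure.map_apply measurable_fst measurableSet_Ioi]; rfl
  have m2 : (Measure.map Prod.snd π) (Ioi z.2) = π {q : ℝ × ℝ | z.2 < q.2} := by
    rw [Measure.map_apply measurable_snd measurableSet_Ioi]; rfl
  rw [m1, m2]
  simp

end Expand

/-! ### The countermonotone coupling -/

section Counter

variable (μ ν : Measure ℝ) [IsProbabilityMeasure μ] [IsProbabilityMeasure ν]

noncomputable def ctm : Measure (ℝ × ℝ) :=
  Measure.map (fun u => (quantile μ u, quantile ν (1 - u))) (volume.restrict (Ioo (0:ℝ) 1))

lemma aemeasurable_ctm_fun :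
    AEMeasurable (fun u => (quantile μ u, quantile ν (1 - u))) (volume.restrict (Ioo (0:ℝ) 1)) :=
  aemeasurable_quantile.prodMk aemeasurable_quantile_one_sub

instance : IsProbabilityMeasure (ctm μ ν) :=
  Measure.isProbabilityMeasure_map (aemeasurable_ctm_fun μ ν)

lemma ctm_fst : Measure.map Prod.fst (ctm μ ν) = μ := by
  rw [ctm, AEMeasurable.map_map_of_aemeasurable measurable_fst.aemeasurable
    (aemeasurable_ctm_fun μ ν)]
  exact map_quantile

lemma ctm_snd : Measure.map Prod.snd (ctm μ ν) = ν := by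
  rw [ctm, AEMeasurable.map_map_of_aemeasurable measurable_snd.aemeasurable
    (aemeasurable_ctm_fun μ ν)]
  exact map_quantile_one_sub

lemma ctm_S (z : ℝ × ℝ) :
    ctm μ ν {q : ℝ × ℝ | z.1 < q.1 ∧ z.2 < q.2}
      = ENNReal.ofReal (1 - cdf ν z.2 - cdf μ z.1) := by
  rw [ctm, Measure.map_apply_of_aemeasurable (aemeasurable_ctm_fun μ ν) (measurableSet_S z),
    Measure.restrict_apply' measurableSet_Ioo]
  have hset : (fun u => (quantile μ u, quantile ν (1 - u))) ⁻¹'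
      {q : ℝ × ℝ | z.1 < q.1 ∧ z.2 < q.2} ∩ Ioo 0 1
      = Ioo (cdf μ z.1) (1 - cdf ν z.2) := by
    ext u
    simp only [mem_inter_iff, mem_preimage, mem_setOf_eq, mem_Ioo]
    constructor
    · rintro ⟨⟨h1, h2⟩, hu0, hu1⟩
      refine ⟨(lt_quantile_iff hu0 hu1).mp h1, ?_⟩
      have := (lt_quantile_iff (by linarith : (0:ℝ) < 1 - u) (by linarith : (1:ℝ) - u < 1)).mp h2
      linarith
    · rintro ⟨h1, h2⟩
      have hu0 : 0 < u := lt_of_le_of_lt (cdf_nonneg μ z.1) h1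
      have hu1 : u < 1 := lt_of_lt_of_le h2 (by have := cdf_nonneg ν z.2; linarith)
      refine ⟨⟨(lt_quantile_iff hu0 hu1).mpr h1,
        (lt_quantile_iff (by linarith : (0:ℝ) < 1 - u) (by linarith : (1:ℝ) - u < 1)).mpr
          (by linarith)⟩, hu0, hu1⟩
  rw [hset, Real.volume_Ioo]

lemma toReal_Ioi (x : ℝ) : (μ (Ioi x)).toReal = 1 - cdf μ x := by
  rw [← compl_Iic, measure_compl measurableSet_Iic (measure_ne_top _ _), measure_univ,
    ← ofReal_cdf,
    ENNReal.toReal_sub_of_le (by simpa using ENNReal.ofReal_le_one.mpr (cdf_le_one μ x))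
      ENNReal.one_ne_top,
    ENNReal.toReal_ofReal (cdf_nonneg μ x)]
  simp

lemma toReal_Iic (x : ℝ) : (μ (Iic x)).toReal = cdf μ x := (cdf_eq_real μ x).symm

lemma ctm_S_le (π : Measure (ℝ × ℝ)) [IsProbabilityMeasure π]
    (hμ : Measure.map Prod.fst π = μ) (hν : Measure.map Prod.snd π = ν) (z : ℝ × ℝ) :
    ((ctm μ ν) {q : ℝ × ℝ | z.1 < q.1 ∧ z.2 < q.2}).toReal
      ≤ (π {q : ℝ × ℝ | z.1 < q.1 ∧ z.2 < q.2}).toReal := by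
  rw [ctm_S]
  rcases le_or_gt (1 - cdf ν z.2 - cdf μ z.1) 0 with h | h
  · rw [ENNReal.ofReal_of_nonpos h]
    simp [ENNReal.toReal_nonneg]
  · rw [ENNReal.toReal_ofReal h.le]
    set S := {q : ℝ × ℝ | z.1 < q.1 ∧ z.2 < q.2}
    have hA : π {q : ℝ × ℝ | z.1 < q.1} = μ (Ioi z.1) := by
      rw [← hμ, Measure.map_apply measurable_fst measurableSet_Ioi]; rfl
    have hB : π {q : ℝ × ℝ | q.2 ≤ z.2} = ν (Iic z.2) := by
      rw [← hν, Measure.map_apply measurable_snd measurableSet_Iic]; rfl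
    have hsub : {q : ℝ × ℝ | z.1 < q.1} ⊆ S ∪ {q : ℝ × ℝ | q.2 ≤ z.2} := by
      intro q hq
      rcases le_or_gt q.2 z.2 with h' | h'
      · exact Or.inr h'
      · exact Or.inl ⟨hq, h'⟩
    have hmeas : π {q : ℝ × ℝ | z.1 < q.1} ≤ π S + π {q : ℝ × ℝ | q.2 ≤ z.2} :=
      le_trans (measure_mono hsub) (measure_union_le _ _)
    have h1 : (π {q : ℝ × ℝ | z.1 < q.1}).toReal ≤ (π S).toReal
        + (π {q : ℝ × ℝ | q.2 ≤ z.2}).toReal := by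
      rw [← ENNReal.toReal_add (measure_ne_top _ _) (measure_ne_top _ _)]
      exact ENNReal.toReal_mono (by finiteness) hmeas
    rw [hA, toReal_Ioi] at h1
    rw [hB, toReal_Iic] at h1
    linarith

lemma gker_ctm_le (π : Measure (ℝ × ℝ)) [IsProbabilityMeasure π]
    (hμ : Measure.map Prod.fst π = μ) (hν : Measure.map Prod.snd π = ν) (z : ℝ × ℝ) :
    gker (ctm μ ν) z ≤ gker π z := by
  rw [gker_eq, gker_eq, ctm_fst, ctm_snd, hμ, hν]
  have := ctm_S_le μ ν π hμ hν z
  linarith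

end Counter

/-- Lower Fréchet–Hoeffding bound: for any coupling `π` of marginals `μ, ν` with finite second
moments, `∫ x y dπ ≥ ∫₀¹ Q_μ(u) Q_ν(1-u) du`; the countermonotone coupling minimizes the
expected product. -/
theorem countermonotone_le_integral_mul (π : Measure (ℝ × ℝ)) [IsProbabilityMeasure π]
    (μ ν : Measure ℝ)
    (hμ : Measure.map Prod.fst π = μ) (hν : Measure.map Prod.snd π = ν)
    (hμ2 : Integrable (fun x : ℝ => x ^ 2) μ) (hν2 : Integrable (fun x : ℝ => x ^ 2) ν) :
    (∫ u in Set.Ioo (0 : ℝ) 1, quantile μ u * quantile ν (1 - u)) ≤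
      ∫ p : ℝ × ℝ, p.1 * p.2 ∂π := by
  subst hμ
  subst hν
  set μ := Measure.map Prod.fst π with hμdef
  set ν := Measure.map Prod.snd π with hνdef
  haveI : IsProbabilityMeasure μ := Measure.isProbabilityMeasure_map measurable_fst.aemeasurable
  haveI : IsProbabilityMeasure ν := Measure.isProbabilityMeasure_map measurable_snd.aemeasurable
  have h1 : Integrable (fun p : ℝ × ℝ => p.1 ^ 2) π := integrable_sq_fst π hμ2
  have h2 : Integrable (fun p : ℝ × ℝ => p.2 ^ 2) π := integrable_sq_snd π hν2
  have hρfst : Measure.map Prod.fst (ctm μ ν) = μ := ctm_fst μ ν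
  have hρsnd : Measure.map Prod.snd (ctm μ ν) = ν := ctm_snd μ ν
  have hρ1 : Integrable (fun p : ℝ × ℝ => p.1 ^ 2) (ctm μ ν) :=
    integrable_sq_fst _ (by rw [hρfst]; exact hμ2)
  have hρ2 : Integrable (fun p : ℝ × ℝ => p.2 ^ 2) (ctm μ ν) :=
    integrable_sq_snd _ (by rw [hρsnd]; exact hν2)
  have hLHS : ∫ p : ℝ × ℝ, p.1 * p.2 ∂(ctm μ ν)
      = ∫ u in Ioo (0:ℝ) 1, quantile μ u * quantile ν (1 - u) := by
    rw [ctm, integral_map (f := fun p : ℝ × ℝ => p.1 * p.2) (aemeasurable_ctm_fun μ ν)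
      (measurable_fst.mul measurable_snd).aestronglyMeasurable]
  rw [← hLHS, hoeffding_repr π h1 h2, hoeffding_repr (ctm μ ν) hρ1 hρ2]
  exact integral_mono (integrable_gker _ hρ1 hρ2) (integrable_gker π h1 h2)
    (fun z => gker_ctm_le μ ν π rfl rfl z)
end
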